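/- arXiv:2501.02441 — 6 statements merged into one kernel-verified Lean document; each statement's English description precedes it below -/
import Mathlib

section
/- (a) If W is a token in {1,…,m} with ℙ(W = i) = p_i for all i, independent of (U_1, …, U_m) (the null hypothesis of no data misappropriation), then the pivotal statistic U_W is Uniform(0,1): ℙ(U_W ≤ r) = r for all r ∈ [0,1]. (b) Under complete inheritance, where the token equals the Gumbel-max selection I, the pivotal statistic Y = U_I satisfies ℙ(U_I ≤ r) = ∑_{i=1}^m p_i r^{1/p_i} for all r ∈ [0,1]. -/
open MeasureTheory ProbabilityTheory Filter Set ENNReal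


private lemma nu_Iic {r : ℝ} (_h0 : 0 ≤ r) (h1 : r ≤ 1) :
    (volume.restrict (Set.Ioo (0:ℝ) 1)) (Set.Iic r) = ENNReal.ofReal r := by
  rw [Measure.restrict_apply measurableSet_Iic]
  apply le_antisymm
  · calc volume (Set.Iic r ∩ Set.Ioo 0 1) ≤ volume (Set.Ioc 0 r) := by
          apply measure_mono; rintro x ⟨hx1, hx2, _⟩; exact ⟨hx2, hx1⟩
      _ = ENNReal.ofReal r := by rw [Real.volume_Ioc, sub_zero]
  · calc ENNReal.ofReal r = volume (Set.Ioo 0 r) := by rw [Real.volume_Ioo, sub_zero]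
      _ ≤ _ := by
          apply measure_mono; rintro x ⟨hx0, hxr⟩; exact ⟨hxr.le, hx0, hxr.trans_le h1⟩

private lemma nu_univ : (volume.restrict (Set.Ioo (0:ℝ) 1)) Set.univ = 1 := by
  rw [Measure.restrict_apply_univ, Real.volume_Ioo]; norm_num

private lemma pi_coord_le {m : ℕ} (i : Fin m) {r : ℝ} (h0 : 0 ≤ r) (h1 : r ≤ 1) :
    (Measure.pi fun _ : Fin m => volume.restrict (Set.Ioo (0:ℝ) 1))
      {x | x i ≤ r} = ENNReal.ofReal r := by
  classical
  have hset : {x : Fin m → ℝ | x i ≤ r}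
      = Set.pi Set.univ (fun j => if j = i then Set.Iic r else Set.univ) := by
    ext x
    simp only [Set.mem_setOf_eq, Set.mem_pi, Set.mem_univ, forall_true_left]
    constructor
    · intro h j; by_cases hj : j = i <;> simp [hj, h]
    · intro h; have := h i; simpa using this
  rw [hset, Measure.pi_pi]
  rw [Finset.prod_eq_single i (fun j _ hj => by simp [hj, nu_univ]) (by simp)]
  simp [nu_Iic h0 h1]


private lemma pi_B_eq {n : ℕ} (p : Fin (n+1) → ℝ) (hp : ∀ i, 0 < p i)
    (hpsum : ∑ i, p i = 1) (i : Fin (n+1)) {r : ℝ} (h0 : 0 ≤ r) (h1 : r ≤ 1) :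
    (Measure.pi fun _ : Fin (n+1) => volume.restrict (Set.Ioo (0:ℝ) 1))
      {x | x i ≤ r ∧ ∀ j, j ≠ i → Real.log (x j) / p j < Real.log (x i) / p i}
      = ENNReal.ofReal (p i * r ^ (1 / p i)) := by
  classical
  set ν : Measure ℝ := volume.restrict (Set.Ioo (0:ℝ) 1) with hν
  set ρ : Measure (Fin n → ℝ) := Measure.pi (fun _ : Fin n => ν) with hρ
  set a : ℝ := (1 - p i) / p i with ha_def
  have hsumσ : ∑ j : Fin n, p (i.succAbove j) = 1 - p i := by
    have h := Fin.sum_univ_succAbove p i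
    rw [hpsum] at h
    linarith
  have hpi1 : p i ≤ 1 := by
    have h : (0:ℝ) ≤ ∑ j : Fin n, p (i.succAbove j) :=
      Finset.sum_nonneg fun j _ => (hp _).le
    linarith
  have ha : 0 ≤ a := div_nonneg (by linarith) (hp i).le
  have hne : p i ≠ 0 := (hp i).ne'
  have hkey : a + 1 = 1 / p i := by rw [ha_def]; field_simp; ring
  set S : Set (ℝ × (Fin n → ℝ)) :=
    {z | z.1 ≤ r ∧ ∀ j, Real.log (z.2 j) / p (i.succAbove j) < Real.log z.1 / p i} with hS
  have hSmeas : MeasurableSet S := by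
    have hSeq : S = {z : ℝ × (Fin n → ℝ) | z.1 ≤ r}
        ∩ ⋂ j, {z : ℝ × (Fin n → ℝ) |
            Real.log (z.2 j) / p (i.succAbove j) < Real.log z.1 / p i} := by
      ext z; simp [hS]
    rw [hSeq]
    apply MeasurableSet.inter
    · exact measurableSet_le measurable_fst measurable_const
    · apply MeasurableSet.iInter
      intro j
      exact measurableSet_lt
        ((Real.measurable_log.comp ((measurable_pi_apply j).comp measurable_snd)).div_const _)
        ((Real.measurable_log.comp measurable_fst).div_const _)
  have hmp := measurePreserving_piFinSuccAbove (fun _ : Fin (n+1) => ν) i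
  have hpre : (MeasurableEquiv.piFinSuccAbove (fun _ : Fin (n+1) => ℝ) i) ⁻¹' S
      = {x | x i ≤ r ∧ ∀ j, j ≠ i → Real.log (x j) / p j < Real.log (x i) / p i} := by
    ext x
    simp only [Set.mem_preimage, MeasurableEquiv.piFinSuccAbove, MeasurableEquiv.coe_mk,
      Equiv.coe_fn_mk, hS, Set.mem_setOf_eq, Fin.insertNthEquiv, Fin.removeNth]
    constructor
    · rintro ⟨h1', h2⟩
      refine ⟨h1', fun k hk => ?_⟩
      obtain ⟨j, rfl⟩ := Fin.exists_succAbove_eq hk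
      exact h2 j
    · rintro ⟨h1', h2⟩
      exact ⟨h1', fun j => h2 _ (Fin.succAbove_ne i j)⟩
  rw [← hpre, hmp.measure_preimage hSmeas.nullMeasurableSet]
  rw [Measure.prod_apply hSmeas]
  have hgind : ∀ t : ℝ, ρ (Prod.mk t ⁻¹' S)
      = Set.indicator (Set.Iic r)
        (fun t => ρ {y | ∀ j, Real.log (y j) / p (i.succAbove j) < Real.log t / p i}) t := by
    intro t
    by_cases ht : t ≤ r
    · rw [Set.indicator_of_mem (show t ∈ Set.Iic r from ht)]
      congr 1
      ext y
      simp [hS, ht]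
    · rw [Set.indicator_of_notMem (show t ∉ Set.Iic r from ht)]
      have : Prod.mk t ⁻¹' S = ∅ := by
        ext y; simp [hS, ht]
      rw [this, measure_empty]
  rw [lintegral_congr hgind, lintegral_indicator measurableSet_Iic _]
  rw [hν, Measure.restrict_restrict measurableSet_Iic]
  have hae : (Set.Iic r ∩ Set.Ioo 0 1 : Set ℝ) =ᵐ[volume] Set.Ioc 0 r := by
    rw [MeasureTheory.ae_eq_set]
    constructor
    · have : (Set.Iic r ∩ Set.Ioo 0 1) \ Set.Ioc 0 r = ∅ := by
        ext x
        constructor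
        · rintro ⟨⟨hx1, hx2, _⟩, h⟩
          exact h ⟨hx2, hx1⟩
        · intro h
          exact absurd h (Set.notMem_empty x)
      simp [this]
    · refine measure_mono_null ?_ (Real.volume_singleton (a := (1:ℝ)))
      intro x hx
      obtain ⟨hmem, hnot⟩ := hx
      obtain ⟨hx0, hxr⟩ := hmem
      simp only [Set.mem_inter_iff, Set.mem_Iic, Set.mem_Ioo, not_and] at hnot
      have hx1 : ¬ (x < 1) := fun h => hnot hxr hx0 h
      have : x = 1 := le_antisymm (hxr.trans h1) (not_lt.mp hx1)
      simp [this]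
  rw [Measure.restrict_congr_set hae]
  have hcongr : ∀ t ∈ Set.Ioc (0:ℝ) r,
      ρ {y | ∀ j, Real.log (y j) / p (i.succAbove j) < Real.log t / p i}
        = ENNReal.ofReal (t ^ a) := by
    rintro t ⟨ht0, htr⟩
    have ht1 : t ≤ 1 := htr.trans h1
    have hYset : {y : Fin n → ℝ | ∀ j, Real.log (y j) / p (i.succAbove j) < Real.log t / p i}
        = Set.pi Set.univ (fun j => {u : ℝ | Real.log u / p (i.succAbove j) < Real.log t / p i}) := by
      ext y; simp [Set.mem_pi]
    rw [hYset, hρ, Measure.pi_pi]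
    have hfac : ∀ j : Fin n,
        ν {u : ℝ | Real.log u / p (i.succAbove j) < Real.log t / p i}
          = ENNReal.ofReal (t ^ (p (i.succAbove j) / p i)) := by
      intro j
      set q : ℝ := p (i.succAbove j) / p i with hq_def
      have hq : 0 < q := div_pos (hp _) (hp i)
      have htq : t ^ q ≤ 1 := Real.rpow_le_one ht0.le ht1 hq.le
      have htq0 : 0 < t ^ q := Real.rpow_pos_of_pos ht0 q
      rw [hν, Measure.restrict_apply
        (measurableSet_lt (Real.measurable_log.div_const _) measurable_const)]
      have : {u : ℝ | Real.log u / p (i.succAbove j) < Real.log t / p i} ∩ Set.Ioo 0 1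
          = Set.Ioo 0 (t ^ q) := by
        ext u
        simp only [Set.mem_inter_iff, Set.mem_setOf_eq, Set.mem_Ioo]
        constructor
        · rintro ⟨hlt, hu0, hu1⟩
          refine ⟨hu0, ?_⟩
          rw [div_lt_div_iff₀ (hp _) (hp i)] at hlt
          rw [← Real.log_lt_log_iff hu0 htq0, Real.log_rpow ht0, hq_def,
            div_mul_eq_mul_div, lt_div_iff₀ (hp i)]
          linarith [mul_comm (Real.log t) (p (i.succAbove j))]
        · rintro ⟨hu0, hutq⟩
          refine ⟨?_, hu0, lt_of_lt_of_le hutq htq⟩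
          have hlog : Real.log u < Real.log (t ^ q) :=
            (Real.log_lt_log_iff hu0 htq0).mpr hutq
          rw [Real.log_rpow ht0, hq_def, div_mul_eq_mul_div,
            lt_div_iff₀ (hp i)] at hlog
          rw [div_lt_div_iff₀ (hp _) (hp i)]
          linarith [mul_comm (Real.log t) (p (i.succAbove j))]
      rw [this, Real.volume_Ioo, sub_zero]
    rw [Finset.prod_congr rfl (fun j _ => hfac j)]
    rw [← ENNReal.ofReal_prod_of_nonneg (fun j _ => (Real.rpow_pos_of_pos ht0 _).le)]
    rw [← Real.rpow_sum_of_pos ht0]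
    congr 1
    rw [← Finset.sum_div, hsumσ]
  rw [setLIntegral_congr_fun measurableSet_Ioc hcongr]
  have hint : IntegrableOn (fun t : ℝ => t ^ a) (Set.Ioc 0 r) volume := by
    rw [← intervalIntegrable_iff_integrableOn_Ioc_of_le h0]
    exact intervalIntegral.intervalIntegrable_rpow (Or.inl ha)
  rw [← ofReal_integral_eq_lintegral_ofReal hint
    ((ae_restrict_iff' measurableSet_Ioc).2 (ae_of_all _ fun t ht => Real.rpow_nonneg ht.1.le _))]
  congr 1
  rw [← intervalIntegral.integral_of_le h0, integral_rpow (Or.inl (by linarith : (-1:ℝ) < a))]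
  rw [hkey, Real.zero_rpow (one_div_ne_zero (hp i).ne'), sub_zero, one_div,
    div_eq_mul_inv, inv_inv]
  ring
/-- Gumbel-max watermark pivotal statistic.
(a) If `W` is a token with law `p`, independent of `(U_1, …, U_m)` (null hypothesis of no data
misappropriation), then the pivotal statistic `U_W` is `Uniform(0,1)`:
`ℙ(U_W ≤ r) = r` for all `r ∈ [0,1]`.
(b) Under complete inheritance, where the token equals the Gumbel-max selection `I`, the pivotal
statistic `Y = U_I` satisfies `ℙ(U_I ≤ r) = ∑ i, p i * r ^ (1 / p i)` for all `r ∈ [0,1]`. -/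
theorem stmt_1
    {Ω : Type*} [MeasurableSpace Ω] (μ : Measure Ω) [IsProbabilityMeasure μ]
    (m : ℕ) (hm : 2 ≤ m) (p : Fin m → ℝ)
    (hp : ∀ i, 0 < p i) (hpsum : ∑ i, p i = 1)
    (U : Fin m → Ω → ℝ) (hUmeas : ∀ i, Measurable (U i))
    (hUlaw : Measure.map (fun ω i => U i ω) μ
      = Measure.pi fun _ : Fin m => volume.restrict (Set.Ioo (0:ℝ) 1))
    (I : Ω → Fin m) (hImeas : Measurable I)
    (hI : ∀ᵐ ω ∂μ, ∀ j, j ≠ I ω →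
      Real.log (U j ω) / p j < Real.log (U (I ω) ω) / p (I ω))
    (W : Ω → Fin m) (hWmeas : Measurable W)
    (hWlaw : ∀ i, μ {ω | W ω = i} = ENNReal.ofReal (p i))
    (hWindep : IndepFun W (fun ω i => U i ω) μ) :
    (∀ r ∈ Set.Icc (0:ℝ) 1, μ {ω | U (W ω) ω ≤ r} = ENNReal.ofReal r)
    ∧ (∀ r ∈ Set.Icc (0:ℝ) 1,
        μ {ω | U (I ω) ω ≤ r} = ENNReal.ofReal (∑ i, p i * r ^ (1 / p i))) := by
  classical
  have hVmeas : Measurable (fun ω i => U i ω : Ω → Fin m → ℝ) :=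
    measurable_pi_lambda _ hUmeas
  constructor
  · -- part (a)
    rintro r ⟨h0, h1⟩
    have hsplit : {ω | U (W ω) ω ≤ r}
        = ⋃ i, (W ⁻¹' {i} ∩ (fun ω i => U i ω) ⁻¹' {x : Fin m → ℝ | x i ≤ r}) := by
      ext ω
      simp only [Set.mem_setOf_eq, Set.mem_iUnion, Set.mem_inter_iff, Set.mem_preimage,
        Set.mem_singleton_iff]
      constructor
      · intro h
        exact ⟨W ω, rfl, h⟩
      · rintro ⟨i, hi, h⟩
        rw [hi]
        exact h
    have hCi : ∀ i : Fin m, MeasurableSet {x : Fin m → ℝ | x i ≤ r} :=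
      fun i => measurableSet_le (measurable_pi_apply i) measurable_const
    rw [hsplit, measure_iUnion]
    · have hterm : ∀ i : Fin m,
          μ (W ⁻¹' {i} ∩ (fun ω i => U i ω) ⁻¹' {x : Fin m → ℝ | x i ≤ r})
            = ENNReal.ofReal (p i) * ENNReal.ofReal r := by
        intro i
        rw [hWindep.measure_inter_preimage_eq_mul _ _ (measurableSet_singleton i) (hCi i)]
        have h1' : μ (W ⁻¹' {i}) = ENNReal.ofReal (p i) := by
          rw [show W ⁻¹' {i} = {ω | W ω = i} from rfl, hWlaw i]
        have h2' : μ ((fun ω i => U i ω) ⁻¹' {x : Fin m → ℝ | x i ≤ r})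
            = ENNReal.ofReal r := by
          rw [← Measure.map_apply hVmeas (hCi i), hUlaw, pi_coord_le i h0 h1]
        rw [h1', h2']
      rw [tsum_fintype]
      calc ∑ i, μ (W ⁻¹' {i} ∩ (fun ω i => U i ω) ⁻¹' {x : Fin m → ℝ | x i ≤ r})
          = ∑ i, ENNReal.ofReal (p i) * ENNReal.ofReal r :=
            Finset.sum_congr rfl fun i _ => hterm i
        _ = (∑ i, ENNReal.ofReal (p i)) * ENNReal.ofReal r := by rw [Finset.sum_mul]
        _ = ENNReal.ofReal (∑ i, p i) * ENNReal.ofReal r := by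
            rw [ENNReal.ofReal_sum_of_nonneg (fun i _ => (hp i).le)]
        _ = ENNReal.ofReal r := by rw [hpsum, ENNReal.ofReal_one, one_mul]
    · intro i k hik
      rw [Function.onFun, Set.disjoint_left]
      rintro ω ⟨hωi, _⟩ ⟨hωk, _⟩
      simp only [Set.mem_preimage, Set.mem_singleton_iff] at hωi hωk
      exact hik (hωi ▸ hωk ▸ rfl)
    · exact fun i => (hWmeas (measurableSet_singleton i)).inter (hVmeas (hCi i))
  · -- part (b)
    rintro r ⟨h0, h1⟩
    obtain ⟨n, rfl⟩ : ∃ n, m = n + 1 := ⟨m - 1, by omega⟩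
    set B : Fin (n+1) → Set (Fin (n+1) → ℝ) := fun i =>
      {x | x i ≤ r ∧ ∀ j, j ≠ i → Real.log (x j) / p j < Real.log (x i) / p i} with hB
    have hBmeas : ∀ i, MeasurableSet (B i) := by
      intro i
      have heq : B i = {x : Fin (n+1) → ℝ | x i ≤ r}
          ∩ ⋂ j, {x : Fin (n+1) → ℝ |
              j ≠ i → Real.log (x j) / p j < Real.log (x i) / p i} := by
        ext x
        simp [hB, Set.mem_iInter]
      rw [heq]
      refine (measurableSet_le (measurable_pi_apply i) measurable_const).inter
        (MeasurableSet.iInter fun j => ?_)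
      by_cases hj : j = i
      · have : {x : Fin (n+1) → ℝ |
            j ≠ i → Real.log (x j) / p j < Real.log (x i) / p i} = Set.univ := by
          ext x; simp [hj]
        rw [this]
        exact MeasurableSet.univ
      · have : {x : Fin (n+1) → ℝ |
            j ≠ i → Real.log (x j) / p j < Real.log (x i) / p i}
            = {x : Fin (n+1) → ℝ |
                Real.log (x j) / p j < Real.log (x i) / p i} := by
          ext x; simp [hj]
        rw [this]
        exact measurableSet_lt
          ((Real.measurable_log.comp (measurable_pi_apply j)).div_const _)
          ((Real.measurable_log.comp (measurable_pi_apply i)).div_const _)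
    have hA : ∀ i, μ ((fun ω i => U i ω) ⁻¹' B i)
        = ENNReal.ofReal (p i * r ^ (1 / p i)) := by
      intro i
      rw [← Measure.map_apply hVmeas (hBmeas i), hUlaw, hB]
      exact pi_B_eq p hp hpsum i h0 h1
    have hmemB : ∀ (ω : Ω) (i : Fin (n+1)),
        ω ∈ (fun ω i => U i ω) ⁻¹' B i
          ↔ (U i ω ≤ r ∧ ∀ j, j ≠ i → Real.log (U j ω) / p j < Real.log (U i ω) / p i) :=
      fun ω i => Iff.rfl
    have haeq : {ω | U (I ω) ω ≤ r} =ᵐ[μ] ⋃ i, (fun ω i => U i ω) ⁻¹' B i := by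
      rw [eventuallyEq_set]
      filter_upwards [hI] with ω hω
      simp only [Set.mem_setOf_eq, Set.mem_iUnion]
      constructor
      · intro h
        exact ⟨I ω, (hmemB ω (I ω)).mpr ⟨h, fun j hj => hω j hj⟩⟩
      · rintro ⟨i, hi⟩
        rw [hmemB ω i] at hi
        by_cases hIi : I ω = i
        · rw [hIi]
          exact hi.1
        · have h1' := hω i (fun h => hIi h.symm)
          have h2' := hi.2 (I ω) hIi
          exact absurd h1' (not_lt.mpr h2'.le)
    rw [measure_congr haeq, measure_iUnion]
    · rw [tsum_fintype]
      rw [ENNReal.ofReal_sum_of_nonneg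
        (fun i _ => mul_nonneg (hp i).le (Real.rpow_nonneg h0 _))]
      exact Finset.sum_congr rfl fun i _ => hA i
    · intro i k hik
      rw [Function.onFun, Set.disjoint_left]
      intro ω hωi hωk
      rw [hmemB ω i] at hωi
      rw [hmemB ω k] at hωk
      exact absurd (hωi.2 k (Ne.symm hik)) (not_lt.mpr (hωk.2 i hik).le)
    · exact fun i => hVmeas (hBmeas i)
end

section
/- For every r ∈ [0,1] and every i ∈ {1,…,m}, ℙ(I = i and U_i ≤ r) = p_i r^{1/p_i}; and for every j ≠ i, ℙ(I = i and U_j ≤ r) = p_i (r − p_j r^{1/p_j}) / (1 − p_j). -/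
open MeasureTheory ProbabilityTheory Filter Set ENNReal

/-- Auxiliary: lintegral of `ofReal (t ^ c)` over `Ioc a b` for `-1 < c`, `0 ≤ a ≤ b`. -/
lemma aux_lint_rpow {c : ℝ} (hc : -1 < c) {a b : ℝ} (ha : 0 ≤ a) (hab : a ≤ b) :
    ∫⁻ t in Set.Ioc a b, ENNReal.ofReal (t ^ c) =
      ENNReal.ofReal ((b ^ (c + 1) - a ^ (c + 1)) / (c + 1)) := by
  rw [← ofReal_integral_eq_lintegral_ofReal]
  · rw [← intervalIntegral.integral_of_le hab, integral_rpow (Or.inl hc)]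
  · have h := (intervalIntegral.intervalIntegrable_rpow' hc (a := a) (b := b))
    exact h.1
  · refine (ae_restrict_iff' measurableSet_Ioc).2 (Filter.Eventually.of_forall ?_)
    intro x hx
    exact Real.rpow_nonneg (le_of_lt (lt_of_le_of_lt ha hx.1)) _

/-- Auxiliary: the restricted uniform measure of `Iio a` for `0 ≤ a ≤ 1`. -/
lemma aux_vol_Iio {a : ℝ} (h0 : 0 ≤ a) (h1 : a ≤ 1) :
    (volume.restrict (Set.Ioo (0:ℝ) 1)) (Set.Iio a) = ENNReal.ofReal a := by
  rw [Measure.restrict_apply measurableSet_Iio]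
  have h : Set.Iio a ∩ Set.Ioo 0 1 = Set.Ioo 0 a := by
    ext x
    simp only [Set.mem_inter_iff, Set.mem_Iio, Set.mem_Ioo]
    exact ⟨fun ⟨h', h2, _⟩ => ⟨h2, h'⟩, fun ⟨h2, h'⟩ => ⟨h', h2, lt_of_lt_of_le h' h1⟩⟩
  rw [h, Real.volume_Ioo, sub_zero]

/-- Auxiliary: the restricted uniform measure of `Iic r` for `0 ≤ r < 1`. -/
lemma aux_vol_Iic {r : ℝ} (h0 : 0 ≤ r) (h1 : r < 1) :
    (volume.restrict (Set.Ioo (0:ℝ) 1)) (Set.Iic r) = ENNReal.ofReal r := by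
  rw [Measure.restrict_apply measurableSet_Iic]
  have h : Set.Iic r ∩ Set.Ioo 0 1 = Set.Ioc 0 r := by
    ext x
    simp only [Set.mem_inter_iff, Set.mem_Iic, Set.mem_Ioo, Set.mem_Ioc]
    exact ⟨fun ⟨h', h2, _⟩ => ⟨h2, h'⟩, fun ⟨h2, h'⟩ => ⟨h', h2, lt_of_le_of_lt h' h1⟩⟩
  rw [h, Real.volume_Ioc, sub_zero]

/-- Auxiliary: product of `ofReal` of powers of a fixed positive base. -/
lemma aux_ofReal_prod_rpow {ι : Type*} (s : Finset ι) {t : ℝ} (ht : 0 < t) (E : ι → ℝ) :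
    ∏ k ∈ s, ENNReal.ofReal (t ^ E k) = ENNReal.ofReal (t ^ ∑ k ∈ s, E k) := by
  classical
  induction s using Finset.induction with
  | empty => simp
  | insert _ _ h ih =>
      rw [Finset.prod_insert h, Finset.sum_insert h, ih, Real.rpow_add ht,
        ENNReal.ofReal_mul (Real.rpow_nonneg ht.le _)]

/-- For the Gumbel-max selection rule `I = argmax_i (log U_i)/p_i` with
i.i.d. `Uniform(0,1)` variables `U_1, …, U_m`: for every `r ∈ [0,1]` and `i`,
`ℙ(I = i ∧ U_i ≤ r) = p_i r^{1/p_i}`, and for every `j ≠ i`,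
`ℙ(I = i ∧ U_j ≤ r) = p_i (r − p_j r^{1/p_j})/(1 − p_j)`. -/
theorem stmt_2
    {Ω : Type*} [MeasurableSpace Ω] (μ : Measure Ω) [IsProbabilityMeasure μ]
    (m : ℕ) (hm : 2 ≤ m) (p : Fin m → ℝ)
    (hp : ∀ i, 0 < p i) (hpsum : ∑ i, p i = 1)
    (U : Fin m → Ω → ℝ) (hUmeas : ∀ i, Measurable (U i))
    (hUlaw : Measure.map (fun ω i => U i ω) μ
      = Measure.pi fun _ : Fin m => volume.restrict (Set.Ioo (0:ℝ) 1))
    (I : Ω → Fin m) (hImeas : Measurable I)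
    (hI : ∀ᵐ ω ∂μ, ∀ j, j ≠ I ω →
      Real.log (U j ω) / p j < Real.log (U (I ω) ω) / p (I ω)) :
    ∀ r ∈ Set.Icc (0:ℝ) 1, ∀ i : Fin m,
      μ {ω | I ω = i ∧ U i ω ≤ r} = ENNReal.ofReal (p i * r ^ (1 / p i))
      ∧ ∀ j : Fin m, j ≠ i →
          μ {ω | I ω = i ∧ U j ω ≤ r}
            = ENNReal.ofReal (p i * (r - p j * r ^ (1 / p j)) / (1 - p j)) := by
  obtain ⟨n, rfl⟩ : ∃ n, m = n + 2 := ⟨m - 2, by omega⟩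
  intro r hr i
  obtain ⟨hr0, hr1⟩ := hr
  haveI hlamprob : IsProbabilityMeasure (volume.restrict (Set.Ioo (0:ℝ) 1)) :=
    ⟨by rw [Measure.restrict_apply_univ]; simp [Real.volume_Ioo]⟩
  set ν : Measure (Fin (n+2) → ℝ) :=
    Measure.pi fun _ : Fin (n+2) => volume.restrict (Set.Ioo (0:ℝ) 1) with hνdef
  have hpi : 0 < p i := hp i
  -- each p k is < 1
  have hlt1 : ∀ k : Fin (n+2), p k < 1 := by
    intro k
    obtain ⟨k', hk'⟩ := exists_ne k
    calc p k < ∑ l, p l :=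
          Finset.single_lt_sum hk' (Finset.mem_univ _) (Finset.mem_univ _) (hp k')
            (fun l _ _ => (hp l).le)
      _ = 1 := hpsum
  have hUmeas_vec : Measurable (fun ω (k : Fin (n+2)) => U k ω) :=
    measurable_pi_iff.mpr hUmeas
  -- almost surely all coordinates are in (0,1)
  have hae_unit : ∀ᵐ ω ∂μ, ∀ k, U k ω ∈ Set.Ioo (0:ℝ) 1 := by
    have h1 : μ ((fun ω (k : Fin (n+2)) => U k ω) ⁻¹'
        (Set.pi Set.univ fun _ => Set.Ioo (0:ℝ) 1)) = 1 := by
      rw [← Measure.map_apply hUmeas_vec (MeasurableSet.univ_pi fun _ => measurableSet_Ioo),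
        hUlaw, Measure.pi_pi]
      simp [Measure.restrict_apply, measurableSet_Ioo, Real.volume_Ioo]
    have h3 : μ ((fun ω (k : Fin (n+2)) => U k ω) ⁻¹'
        (Set.pi Set.univ fun _ => Set.Ioo (0:ℝ) 1))ᶜ = 0 :=
      (prob_compl_eq_zero_iff
        (hUmeas_vec (MeasurableSet.univ_pi fun _ => measurableSet_Ioo))).mpr h1
    have h4 : ∀ᵐ ω ∂μ, ω ∈ (fun ω (k : Fin (n+2)) => U k ω) ⁻¹'
        (Set.pi Set.univ fun _ => Set.Ioo (0:ℝ) 1) := by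
      rw [MeasureTheory.ae_iff]
      exact h3
    filter_upwards [h4] with ω hω
    intro k
    exact hω k (Set.mem_univ k)
  -- the "good" set in the product space
  set A : Set (Fin (n+2) → ℝ) := {x | ∀ k, k ≠ i → x k < x i ^ (p k / p i)} with hAdef
  have hAmeas : MeasurableSet A := by
    have : A = ⋂ k, ⋂ (_ : k ≠ i), {x : Fin (n+2) → ℝ | x k < x i ^ (p k / p i)} := by
      ext x; simp [hAdef]
    rw [this]
    exact MeasurableSet.iInter fun k => MeasurableSet.iInter fun _ =>
      measurableSet_lt (measurable_pi_apply k) ((measurable_pi_apply i).pow measurable_const)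
  -- the key reduction: probabilities are ν-measures of explicit sets
  have key : ∀ j : Fin (n+2),
      μ {ω | I ω = i ∧ U j ω ≤ r} = ν (A ∩ {x | x j ≤ r}) := by
    intro j
    have hsetmeas : MeasurableSet (A ∩ {x : Fin (n+2) → ℝ | x j ≤ r}) :=
      hAmeas.inter (measurableSet_le (measurable_pi_apply j) measurable_const)
    have hae_eq : {ω | I ω = i ∧ U j ω ≤ r}
        =ᵐ[μ] ((fun ω (k : Fin (n+2)) => U k ω) ⁻¹' (A ∩ {x | x j ≤ r})) := by
      filter_upwards [hI, hae_unit] with ω hIω hunit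
      have hlog : ∀ k l : Fin (n+2),
          (Real.log (U k ω) / p k < Real.log (U l ω) / p l ↔
            U k ω < U l ω ^ (p k / p l)) := by
        intro k l
        have h0k : 0 < U k ω := (hunit k).1
        have h0l : 0 < U l ω := (hunit l).1
        rw [← Real.log_lt_log_iff h0k (Real.rpow_pos_of_pos h0l _), Real.log_rpow h0l,
          div_lt_div_iff₀ (hp k) (hp l), div_mul_eq_mul_div, lt_div_iff₀ (hp l)]
        constructor <;> intro h <;> nlinarith [h]
      have hiff : (I ω = i ∧ U j ω ≤ r) ↔
          ((∀ k, k ≠ i → U k ω < U i ω ^ (p k / p i)) ∧ U j ω ≤ r) := by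
        constructor
        · rintro ⟨hIi, hjr⟩
          refine ⟨fun k hk => ?_, hjr⟩
          have hne : k ≠ I ω := by rw [hIi]; exact hk
          have := hIω k hne
          rw [hIi] at this
          exact (hlog k i).mp this
        · rintro ⟨hA', hjr⟩
          refine ⟨?_, hjr⟩
          by_contra hne
          have h1 := hIω i (fun h => hne h.symm)
          have h2 := (hlog (I ω) i).mpr (hA' _ hne)
          exact lt_asymm h1 h2
      show (I ω = i ∧ U j ω ≤ r) = _
      rw [eq_iff_iff]
      exact hiff
    rw [measure_congr hae_eq, ← hUlaw, ← Measure.map_apply hUmeas_vec hsetmeas]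
  -- setup for the product-measure computations
  set e : (Fin (n+2) → ℝ) ≃ᵐ ℝ × (Fin (n+1) → ℝ) :=
    MeasurableEquiv.piFinSuccAbove (fun _ : Fin (n+2) => ℝ) i with hedef
  have hmp := measurePreserving_piFinSuccAbove
    (fun _ : Fin (n+2) => volume.restrict (Set.Ioo (0:ℝ) 1)) i
  have he_apply : ∀ x : Fin (n+2) → ℝ,
      e x = (x i, fun k' : Fin (n+1) => x (i.succAbove k')) := fun _ => rfl
  set E : Fin (n+1) → ℝ := fun k' => p (i.succAbove k') / p i with hEdef
  have hE0 : ∀ k', 0 < E k' := fun k' => div_pos (hp _) hpi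
  have hsumE : ∑ k', E k' = (1 - p i) / p i := by
    rw [hEdef, ← Finset.sum_div]
    congr 1
    have h := Fin.sum_univ_succAbove p i
    rw [hpsum] at h
    linarith
  have hc : -1 < (1 - p i) / p i := by
    rw [lt_div_iff₀ hpi]
    linarith
  have hc1 : (1 - p i) / p i + 1 = 1 / p i := by field_simp; ring
  -- measure of Iio (t ^ E k') for t ∈ (0,1]
  have hIio : ∀ t : ℝ, 0 < t → t ≤ 1 → ∀ c : ℝ, 0 < c →
      (volume.restrict (Set.Ioo (0:ℝ) 1)) (Set.Iio (t ^ c)) = ENNReal.ofReal (t ^ c) :=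
    fun t ht0 ht1 c hc0 =>
      aux_vol_Iio (Real.rpow_nonneg ht0.le c) (Real.rpow_le_one ht0.le ht1 hc0.le)
  constructor
  · -- case j = i
    rw [key i]
    set T₂ : Set (ℝ × (Fin (n+1) → ℝ)) :=
      {q | (∀ k', q.2 k' < q.1 ^ E k') ∧ q.1 ≤ r} with hT₂def
    have hT₂meas : MeasurableSet T₂ := by
      have : T₂ = (⋂ k', {q : ℝ × (Fin (n+1) → ℝ) | q.2 k' < q.1 ^ E k'}) ∩
          {q : ℝ × (Fin (n+1) → ℝ) | q.1 ≤ r} := by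
        ext q; simp [hT₂def]
      rw [this]
      exact (MeasurableSet.iInter fun k' => measurableSet_lt
          ((measurable_pi_apply k').comp measurable_snd)
          (measurable_fst.pow measurable_const)).inter
        (measurableSet_le measurable_fst measurable_const)
    have hpre : e ⁻¹' T₂ = A ∩ {x | x i ≤ r} := by
      ext x
      rw [Set.mem_preimage, he_apply]
      simp only [hT₂def, Set.mem_setOf_eq, Set.mem_inter_iff, hAdef]
      constructor
      · rintro ⟨h1, h2⟩
        refine ⟨fun k hk => ?_, h2⟩
        obtain ⟨k', rfl⟩ := Fin.exists_succAbove_eq hk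
        exact h1 k'
      · rintro ⟨h1, h2⟩
        exact ⟨fun k' => h1 _ (Fin.succAbove_ne i k'), h2⟩
    rw [← hpre, hmp.measure_preimage_equiv, Measure.prod_apply hT₂meas]
    have hslice : ∀ t : ℝ,
        (Measure.pi fun _ : Fin (n+1) => volume.restrict (Set.Ioo (0:ℝ) 1))
            (Prod.mk t ⁻¹' T₂)
          = (Set.Iic r).indicator
              (fun t => ∏ k', (volume.restrict (Set.Ioo (0:ℝ) 1)) (Set.Iio (t ^ E k'))) t := by
      intro t
      by_cases h : t ≤ r
      · have hs : Prod.mk t ⁻¹' T₂ = Set.pi Set.univ fun k' => Set.Iio (t ^ E k') := by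
          ext y; simp [hT₂def, Set.mem_pi, h]
        rw [hs, Measure.pi_pi, Set.indicator_of_mem (Set.mem_Iic.mpr h)]
      · have hs : Prod.mk t ⁻¹' T₂ = ∅ := by
          ext y; simp [hT₂def, h]
        rw [hs, measure_empty, Set.indicator_of_notMem (fun hh => h (Set.mem_Iic.mp hh))]
    rw [lintegral_congr hslice, lintegral_indicator measurableSet_Iic,
      Measure.restrict_restrict measurableSet_Iic]
    have hset : (Set.Iic r ∩ Set.Ioo 0 1 : Set ℝ) =ᵐ[volume] Set.Ioc 0 r := by
      rw [MeasureTheory.ae_eq_set]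
      constructor
      · have hempty : (Set.Iic r ∩ Set.Ioo 0 1) \ Set.Ioc 0 r = (∅ : Set ℝ) := by
          ext x
          simp only [Set.mem_diff, Set.mem_inter_iff, Set.mem_Iic, Set.mem_Ioo, Set.mem_Ioc,
            Set.mem_empty_iff_false, iff_false]
          rintro ⟨⟨hxr, hx0, _⟩, hnot⟩
          exact hnot ⟨hx0, hxr⟩
        rw [hempty, measure_empty]
      · refine measure_mono_null ?_ (measure_singleton (1:ℝ))
        intro x hx
        rcases hx with ⟨⟨hx0, hxr⟩, hnot⟩
        have hx1 : ¬ x < 1 := fun h =>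
          hnot (Set.mem_inter (Set.mem_Iic.mpr hxr) (Set.mem_Ioo.mpr ⟨hx0, h⟩))
        have hxeq : x = 1 := le_antisymm (le_trans hxr hr1) (not_lt.mp hx1)
        simp [hxeq]
    rw [Measure.restrict_congr_set hset]
    have hcong : ∀ t ∈ Set.Ioc (0:ℝ) r,
        (∏ k', (volume.restrict (Set.Ioo (0:ℝ) 1)) (Set.Iio (t ^ E k')))
          = ENNReal.ofReal (t ^ ((1 - p i) / p i)) := by
      intro t ht
      have ht0 : 0 < t := ht.1
      have ht1 : t ≤ 1 := le_trans ht.2 hr1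
      calc (∏ k', (volume.restrict (Set.Ioo (0:ℝ) 1)) (Set.Iio (t ^ E k')))
          = ∏ k', ENNReal.ofReal (t ^ E k') := by
            exact Finset.prod_congr rfl fun k' _ => hIio t ht0 ht1 (E k') (hE0 k')
        _ = ENNReal.ofReal (t ^ ∑ k', E k') := aux_ofReal_prod_rpow _ ht0 E
        _ = ENNReal.ofReal (t ^ ((1 - p i) / p i)) := by rw [hsumE]
    rw [setLIntegral_congr_fun_ae measurableSet_Ioc (Filter.Eventually.of_forall hcong),
      aux_lint_rpow hc le_rfl hr0, hc1,
      Real.zero_rpow (by positivity : (1:ℝ) / p i ≠ 0), sub_zero]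
    congr 1
    field_simp
  · -- case j ≠ i
    intro j hj
    rw [key j]
    obtain ⟨j'', hj''⟩ := Fin.exists_succAbove_eq hj
    have hpj : 0 < p j := hp j
    have hpj1 : p j < 1 := hlt1 j
    have h1pj : (0:ℝ) < 1 - p j := by linarith
    set s : ℝ := r ^ (p i / p j) with hsdef
    have hs0 : 0 ≤ s := Real.rpow_nonneg hr0 _
    have hs1 : s ≤ 1 := Real.rpow_le_one hr0 hr1 (by positivity)
    have hEj : E j'' = p j / p i := by rw [hEdef]; simp [hj'']
    have hsE : s ^ (p j / p i) = r := by
      rw [hsdef, ← Real.rpow_mul hr0]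
      have h : p i / p j * (p j / p i) = 1 := by field_simp
      rw [h, Real.rpow_one]
    set b : ℝ := (1 - p i - p j) / p i with hbdef
    have hb1 : b + 1 = (1 - p j) / p i := by rw [hbdef]; field_simp; ring
    have hb : -1 < b := by rw [hbdef, lt_div_iff₀ hpi]; linarith
    set T₂ : Set (ℝ × (Fin (n+1) → ℝ)) :=
      {q | (∀ k', q.2 k' < q.1 ^ E k') ∧ q.2 j'' ≤ r} with hT₂def
    have hT₂meas : MeasurableSet T₂ := by
      have h : T₂ = (⋂ k', {q : ℝ × (Fin (n+1) → ℝ) | q.2 k' < q.1 ^ E k'}) ∩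
          {q : ℝ × (Fin (n+1) → ℝ) | q.2 j'' ≤ r} := by
        ext q; simp [hT₂def]
      rw [h]
      exact (MeasurableSet.iInter fun k' => measurableSet_lt
          ((measurable_pi_apply k').comp measurable_snd)
          (measurable_fst.pow measurable_const)).inter
        (measurableSet_le (((measurable_pi_apply j'').comp measurable_snd :
          Measurable fun q : ℝ × (Fin (n+1) → ℝ) => q.2 j'')) measurable_const)
    have hpre : e ⁻¹' T₂ = A ∩ {x | x j ≤ r} := by
      ext x
      rw [Set.mem_preimage, he_apply]
      simp only [hT₂def, Set.mem_setOf_eq, Set.mem_inter_iff, hAdef]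
      constructor
      · rintro ⟨h1, h2⟩
        refine ⟨fun k hk => ?_, by rwa [hj''] at h2⟩
        obtain ⟨k', rfl⟩ := Fin.exists_succAbove_eq hk
        exact h1 k'
      · rintro ⟨h1, h2⟩
        exact ⟨fun k' => h1 _ (Fin.succAbove_ne i k'), by rwa [hj'']⟩
    rw [← hpre, hmp.measure_preimage_equiv, Measure.prod_apply hT₂meas]
    have hmeas_eval : ∀ t : ℝ,
        (Measure.pi fun _ : Fin (n+1) => volume.restrict (Set.Ioo (0:ℝ) 1))
            (Prod.mk t ⁻¹' T₂)
          = ∏ k', (volume.restrict (Set.Ioo (0:ℝ) 1))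
              (if k' = j'' then Set.Iio (t ^ E k') ∩ Set.Iic r else Set.Iio (t ^ E k')) := by
      intro t
      have hs : Prod.mk t ⁻¹' T₂ = Set.pi Set.univ
          (fun k' => if k' = j'' then Set.Iio (t ^ E k') ∩ Set.Iic r
            else Set.Iio (t ^ E k')) := by
        ext y
        simp only [Set.mem_preimage, hT₂def, Set.mem_setOf_eq, Set.mem_pi, Set.mem_univ,
          true_implies]
        constructor
        · rintro ⟨h1, h2⟩ k'
          by_cases hk : k' = j''
          · subst hk; simp only [if_pos rfl]; exact ⟨h1 k', h2⟩
          · simp only [if_neg hk]; exact h1 k'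
        · intro h
          constructor
          · intro k'
            have hk := h k'
            by_cases hkk : k' = j''
            · subst hkk; rw [if_pos rfl] at hk; exact hk.1
            · rwa [if_neg hkk] at hk
          · have hk := h j''
            rw [if_pos rfl] at hk
            exact hk.2
      rw [hs, Measure.pi_pi]
    rw [lintegral_congr hmeas_eval,
      setLIntegral_congr (Ioo_ae_eq_Ioc (μ := volume) (a := (0:ℝ)) (b := 1)),
      ← Set.Ioc_union_Ioc_eq_Ioc hs0 hs1,
      lintegral_union measurableSet_Ioc (Set.Ioc_disjoint_Ioc_of_le le_rfl)]
    -- sum of the exponents over the erased set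
    have hsumE' : ∑ k' ∈ Finset.univ.erase j'', E k' = b := by
      have h := Finset.sum_erase_add Finset.univ E (Finset.mem_univ j'')
      rw [hsumE, hEj] at h
      rw [hbdef]
      have h2 : ∑ k' ∈ Finset.univ.erase j'', E k' = (1 - p i) / p i - p j / p i := by
        linarith
      rw [h2, div_sub_div_same]
    -- first piece
    have hpiece1 : ∫⁻ t in Set.Ioc (0:ℝ) s,
        (∏ k', (volume.restrict (Set.Ioo (0:ℝ) 1))
          (if k' = j'' then Set.Iio (t ^ E k') ∩ Set.Iic r else Set.Iio (t ^ E k')))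
        = ENNReal.ofReal (p i * r ^ (1 / p j)) := by
      have hcong : ∀ t ∈ Set.Ioc (0:ℝ) s,
          (∏ k', (volume.restrict (Set.Ioo (0:ℝ) 1))
            (if k' = j'' then Set.Iio (t ^ E k') ∩ Set.Iic r else Set.Iio (t ^ E k')))
          = ENNReal.ofReal (t ^ ((1 - p i) / p i)) := by
        intro t ht
        have ht0 : 0 < t := ht.1
        have ht1 : t ≤ 1 := le_trans ht.2 hs1
        have hstep : ∀ k', (if k' = j'' then Set.Iio (t ^ E k') ∩ Set.Iic r
            else Set.Iio (t ^ E k')) = Set.Iio (t ^ E k') := by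
          intro k'
          split_ifs with hk
          · refine Set.inter_eq_left.mpr (fun x hx => ?_)
            have hle : t ^ E k' ≤ r := by
              rw [hk, hEj, ← hsE]
              exact Real.rpow_le_rpow ht0.le ht.2 (by positivity)
            exact le_trans (le_of_lt hx) hle
          · rfl
        calc (∏ k', (volume.restrict (Set.Ioo (0:ℝ) 1))
              (if k' = j'' then Set.Iio (t ^ E k') ∩ Set.Iic r else Set.Iio (t ^ E k')))
            = ∏ k', ENNReal.ofReal (t ^ E k') := by
              refine Finset.prod_congr rfl fun k' _ => ?_
              rw [hstep k']
              exact hIio t ht0 ht1 (E k') (hE0 k')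
          _ = ENNReal.ofReal (t ^ ∑ k', E k') := aux_ofReal_prod_rpow _ ht0 E
          _ = ENNReal.ofReal (t ^ ((1 - p i) / p i)) := by rw [hsumE]
      rw [setLIntegral_congr_fun_ae measurableSet_Ioc (Filter.Eventually.of_forall hcong),
        aux_lint_rpow hc le_rfl hs0, hc1,
        Real.zero_rpow (by positivity : (1:ℝ) / p i ≠ 0), sub_zero]
      have hsr : s ^ (1 / p i) = r ^ (1 / p j) := by
        rw [hsdef, ← Real.rpow_mul hr0]
        congr 1
        field_simp
      rw [hsr]
      congr 1
      field_simp
    -- second piece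
    have hpiece2 : ∫⁻ t in Set.Ioc s 1,
        (∏ k', (volume.restrict (Set.Ioo (0:ℝ) 1))
          (if k' = j'' then Set.Iio (t ^ E k') ∩ Set.Iic r else Set.Iio (t ^ E k')))
        = ENNReal.ofReal r * ENNReal.ofReal ((1 - s ^ (b + 1)) / (b + 1)) := by
      have hcong : ∀ t ∈ Set.Ioc s 1,
          (∏ k', (volume.restrict (Set.Ioo (0:ℝ) 1))
            (if k' = j'' then Set.Iio (t ^ E k') ∩ Set.Iic r else Set.Iio (t ^ E k')))
          = ENNReal.ofReal r * ENNReal.ofReal (t ^ b) := by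
        intro t ht
        have ht0 : 0 < t := lt_of_le_of_lt hs0 ht.1
        have ht1 : t ≤ 1 := ht.2
        have hrt : r < t ^ E j'' := by
          rw [hEj, ← hsE]
          exact Real.rpow_lt_rpow hs0 ht.1 (by positivity)
        have hr1' : r < 1 :=
          lt_of_lt_of_le hrt (Real.rpow_le_one ht0.le ht1 (hE0 j'').le)
        calc (∏ k', (volume.restrict (Set.Ioo (0:ℝ) 1))
              (if k' = j'' then Set.Iio (t ^ E k') ∩ Set.Iic r else Set.Iio (t ^ E k')))
            = (volume.restrict (Set.Ioo (0:ℝ) 1)) (Set.Iio (t ^ E j'') ∩ Set.Iic r)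
              * ∏ k' ∈ Finset.univ.erase j'',
                  (volume.restrict (Set.Ioo (0:ℝ) 1)) (Set.Iio (t ^ E k')) := by
              rw [← Finset.mul_prod_erase Finset.univ _ (Finset.mem_univ j''), if_pos rfl]
              congr 1
              refine Finset.prod_congr rfl fun k' hk' => ?_
              rw [if_neg (Finset.ne_of_mem_erase hk')]
          _ = ENNReal.ofReal r * ENNReal.ofReal (t ^ b) := by
              have hint : Set.Iio (t ^ E j'') ∩ Set.Iic r = Set.Iic r :=
                Set.inter_eq_right.mpr (fun x hx => lt_of_le_of_lt hx hrt)
              rw [hint, aux_vol_Iic hr0 hr1']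
              congr 1
              calc ∏ k' ∈ Finset.univ.erase j'',
                    (volume.restrict (Set.Ioo (0:ℝ) 1)) (Set.Iio (t ^ E k'))
                  = ∏ k' ∈ Finset.univ.erase j'', ENNReal.ofReal (t ^ E k') :=
                    Finset.prod_congr rfl fun k' _ => hIio t ht0 ht1 (E k') (hE0 k')
                _ = ENNReal.ofReal (t ^ ∑ k' ∈ Finset.univ.erase j'', E k') :=
                    aux_ofReal_prod_rpow _ ht0 E
                _ = ENNReal.ofReal (t ^ b) := by rw [hsumE']
      rw [setLIntegral_congr_fun_ae measurableSet_Ioc (Filter.Eventually.of_forall hcong),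
        lintegral_const_mul (ENNReal.ofReal r)
          ((measurable_id'.pow measurable_const).ennreal_ofReal :
            Measurable fun t : ℝ => ENNReal.ofReal (t ^ b)),
        aux_lint_rpow hb hs0 hs1, Real.one_rpow]
    rw [hpiece1, hpiece2, hb1]
    have hsb : s ^ ((1 - p j) / p i) = r ^ ((1 - p j) / p j) := by
      rw [hsdef, ← Real.rpow_mul hr0]
      congr 1
      field_simp
    rw [hsb]
    have hnn2 : 0 ≤ (1 - r ^ ((1 - p j) / p j)) / ((1 - p j) / p i) := by
      apply div_nonneg _ (by positivity)
      have : r ^ ((1 - p j) / p j) ≤ 1 := Real.rpow_le_one hr0 hr1 (by positivity)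
      linarith
    rw [← ENNReal.ofReal_mul hr0,
      ← ENNReal.ofReal_add (by positivity) (mul_nonneg hr0 hnn2)]
    congr 1
    have hXY : r * r ^ ((1 - p j) / p j) = r ^ (1 / p j) := by
      rcases eq_or_lt_of_le hr0 with h0 | h0
      · rw [← h0, Real.zero_rpow (by positivity : (1:ℝ) / p j ≠ 0),
          Real.zero_rpow (by positivity : (1 - p j) / p j ≠ 0), mul_zero]
      · rw [← Real.rpow_one_add' h0.le (by positivity)]
        congr 1
        field_simp; ring
    rw [← hXY]
    field_simp
    ring
end

section
/- Under the partial-inheritance Gumbel-max model, the pivotal statistic Y = U_W satisfies, for every r ∈ [0,1], ℙ(Y ≤ r) = ∑_{i=1}^m ∑_{j ≠ i} [p_i/(1 − p_j)] (r − p_j r^{1/p_j}) q_{ij} + ∑_{i=1}^m p_i r^{1/p_i} q_{ii}. -/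
open MeasureTheory ProbabilityTheory Filter Set ENNReal


lemma vol_between {s : ℝ} {S : Set ℝ} (h1 : Ioo 0 s ⊆ S) (h2 : S ⊆ Ioc 0 s) :
    volume S = ENNReal.ofReal s := by
  refine le_antisymm ?_ ?_
  · calc volume S ≤ volume (Ioc 0 s) := measure_mono h2
      _ = ENNReal.ofReal s := by rw [Real.volume_Ioc, sub_zero]
  · calc ENNReal.ofReal s = volume (Ioo 0 s) := by rw [Real.volume_Ioo, sub_zero]
      _ ≤ volume S := measure_mono h1

lemma lam_Iio {a : ℝ} (h1 : a ≤ 1) :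
    (volume.restrict (Ioo (0:ℝ) 1)) (Iio a) = ENNReal.ofReal a := by
  rw [Measure.restrict_apply measurableSet_Iio]
  refine vol_between ?_ ?_
  · rintro t ⟨ht0, hts⟩
    exact ⟨hts, ht0, lt_of_lt_of_le hts h1⟩
  · rintro t ⟨hta, ht0, _⟩
    exact ⟨ht0, le_of_lt hta⟩

lemma lam_Iic_Iio {r a : ℝ} (ha1 : a ≤ 1) :
    (volume.restrict (Ioo (0:ℝ) 1)) (Iic r ∩ Iio a) = ENNReal.ofReal (min r a) := by
  rw [Measure.restrict_apply (measurableSet_Iic.inter measurableSet_Iio)]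
  refine vol_between ?_ ?_
  · rintro t ⟨ht0, hts⟩
    exact ⟨⟨le_of_lt (lt_of_lt_of_le hts (min_le_left _ _)),
      lt_of_lt_of_le hts (min_le_right _ _)⟩, ht0,
      lt_of_lt_of_le hts (le_trans (min_le_right _ _) ha1)⟩
  · rintro t ⟨⟨htr, hta⟩, ht0, _⟩
    exact ⟨ht0, le_min htr (le_of_lt hta)⟩

lemma lint_rpow {c : ℝ} (hc : -1 < c) {a b : ℝ} (ha : 0 ≤ a) (hab : a ≤ b) :
    ∫⁻ t in Set.Ioo a b, ENNReal.ofReal (t ^ c)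
      = ENNReal.ofReal ((b ^ (c+1) - a ^ (c+1)) / (c+1)) := by
  have hc1 : 0 < c + 1 := by linarith
  have hint : IntegrableOn (fun t : ℝ => t ^ c) (Set.Ioo a b) volume := by
    have := (intervalIntegral.intervalIntegrable_rpow' (a := a) (b := b) hc)
    rw [intervalIntegrable_iff_integrableOn_Ioo_of_le hab] at this
    exact this
  rw [← ofReal_integral_eq_lintegral_ofReal hint ?_]
  · congr 1
    rw [← MeasureTheory.integral_Ioc_eq_integral_Ioo,
      ← intervalIntegral.integral_of_le hab, integral_rpow (Or.inl hc)]
  · filter_upwards [ae_restrict_mem measurableSet_Ioo] with t ht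
    exact le_of_lt (Real.rpow_pos_of_pos (lt_of_le_of_lt ha ht.1) c)

lemma key {n : ℕ} (p : Fin (n+1) → ℝ) (hp : ∀ i, 0 < p i) (hpsum : ∑ i, p i = 1)
    (i j : Fin (n+1)) (r : ℝ) (hr0 : 0 ≤ r) (hr1 : r ≤ 1) :
    (Measure.pi fun _ : Fin (n+1) => volume.restrict (Ioo (0:ℝ) 1))
      {u | u j ≤ r ∧ ∀ k, k ≠ i → u k < u i ^ (p k / p i)}
    = ENNReal.ofReal (if j = i then p i * r ^ (1/p i)
        else p i / (1 - p j) * (r - p j * r ^ (1/p j))) := by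
  set lam := volume.restrict (Ioo (0:ℝ) 1) with hlam
  set nu' := Measure.pi fun _ : Fin n => lam with hnu'
  set c : Fin n → ℝ := fun j' => p (i.succAbove j') / p i with hc
  have hcpos : ∀ j', 0 < c j' := fun j' => div_pos (hp _) (hp i)
  have hpi1 : p i ≤ 1 := by
    rw [← hpsum]
    exact Finset.single_le_sum (fun k _ => (hp k).le) (Finset.mem_univ i)
  have hcsum : ∑ j', c j' = (1 - p i) / p i := by
    have h1 := Fin.sum_univ_succAbove p i
    rw [hpsum] at h1
    have hsum' : ∑ j', p (i.succAbove j') = 1 - p i := by linarith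
    rw [hc, ← Finset.sum_div, hsum']
  set e := MeasurableEquiv.piFinSuccAbove (fun _ : Fin (n+1) => ℝ) i with he
  have hmp : Measure.map e (Measure.pi fun _ : Fin (n+1) => lam) = lam.prod nu' :=
    (measurePreserving_piFinSuccAbove (fun _ => lam) i).map_eq
  have hae : (Iic r ∩ Ioo (0:ℝ) 1 : Set ℝ) =ᵐ[volume] Ioo 0 r := by
    rw [MeasureTheory.ae_eq_set]
    constructor
    · have hsub : (Iic r ∩ Ioo 0 1) \ Ioo (0:ℝ) r ⊆ {r} := by
        intro t ht
        simp only [mem_diff, mem_inter_iff, mem_Iic, mem_Ioo, not_and, not_lt] at ht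
        obtain ⟨⟨htr, ht0, ht1⟩, hnot⟩ := ht
        exact mem_singleton_iff.2 (le_antisymm htr (hnot ht0))
      exact measure_mono_null hsub (measure_singleton r)
    · have : Ioo (0:ℝ) r \ (Iic r ∩ Ioo 0 1) = ∅ := by
        apply eq_empty_iff_forall_notMem.2
        intro t ht
        exact ht.2 ⟨ht.1.2.le, ht.1.1, lt_of_lt_of_le ht.1.2 hr1⟩
      rw [this, measure_empty]
  by_cases hji : j = i
  · -- diagonal case
    rw [if_pos hji]
    subst hji
    set T : Set (ℝ × (Fin n → ℝ)) :=
      {tv | tv.1 ≤ r ∧ ∀ j', tv.2 j' < tv.1 ^ c j'} with hT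
    have hTmeas : MeasurableSet T := by
      have : T = {tv : ℝ × (Fin n → ℝ) | tv.1 ≤ r} ∩
          ⋂ j', {tv : ℝ × (Fin n → ℝ) | tv.2 j' < tv.1 ^ c j'} := by
        ext tv; simp [hT, Set.mem_iInter]
      rw [this]
      refine (measurable_fst measurableSet_Iic).inter (MeasurableSet.iInter fun j' => ?_)
      exact measurableSet_lt (by fun_prop) (by fun_prop)
    have hS : {u : Fin (n+1) → ℝ | u j ≤ r ∧ ∀ k, k ≠ j → u k < u j ^ (p k / p j)}
        = e ⁻¹' T := by
      ext u
      simp only [mem_preimage, mem_setOf_eq, hT]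
      constructor
      · rintro ⟨h1, h2⟩
        exact ⟨h1, fun j' => h2 _ (Fin.succAbove_ne j j')⟩
      · rintro ⟨h1, h2⟩
        refine ⟨h1, fun k hk => ?_⟩
        obtain ⟨j', rfl⟩ := Fin.exists_succAbove_eq hk
        exact h2 j'
    rw [hS, ← MeasurableEquiv.map_apply e, hmp, Measure.prod_apply hTmeas]
    have hslice : ∀ t : ℝ, nu' (Prod.mk t ⁻¹' T)
        = (Iic r).indicator (fun t => nu' (univ.pi fun j' => Iio (t ^ c j'))) t := by
      intro t
      by_cases htr : t ≤ r
      · rw [indicator_of_mem (mem_Iic.2 htr)]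
        congr 1
        ext v
        simp [hT, htr, Set.mem_pi]
      · rw [indicator_of_notMem (fun h => htr (mem_Iic.1 h))]
        have hemp : Prod.mk t ⁻¹' T = ∅ := by
          ext v; simp [hT, htr]
        rw [hemp, measure_empty]
    rw [lintegral_congr hslice, lintegral_indicator measurableSet_Iic, hlam,
      Measure.restrict_restrict measurableSet_Iic, setLIntegral_congr hae]
    have hcol : ∀ t ∈ Ioo (0:ℝ) r,
        nu' (univ.pi fun j' => Iio (t ^ c j'))
          = ENNReal.ofReal (t ^ ((1 - p j) / p j)) := by
      intro t ht
      have ht1 : t < 1 := lt_of_lt_of_le ht.2 hr1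
      rw [hnu', Measure.pi_pi]
      have : ∀ j', lam (Iio (t ^ c j')) = ENNReal.ofReal (t ^ c j') := by
        intro j'
        exact lam_Iio (Real.rpow_le_one ht.1.le ht1.le (hcpos j').le)
      simp_rw [this]
      rw [← ENNReal.ofReal_prod_of_nonneg (fun _ _ => Real.rpow_nonneg ht.1.le _),
        ← Real.rpow_sum_of_pos ht.1, hcsum]
    rw [setLIntegral_congr_fun measurableSet_Ioo hcol,
      lint_rpow (by
        have h1 : (0:ℝ) ≤ (1 - p j) / p j := div_nonneg (by linarith) (hp j).le
        linarith) le_rfl hr0]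
    have hexp : (1 - p j) / p j + 1 = 1 / p j := by field_simp [(hp j).ne']; ring
    rw [hexp, Real.zero_rpow (one_div_ne_zero (hp j).ne'), sub_zero]
    congr 1
    rw [one_div, div_eq_mul_inv, inv_inv]
    ring
  · -- off-diagonal case
    rw [if_neg hji]
    obtain ⟨j0, hj0⟩ := Fin.exists_succAbove_eq hji
    have hpj1 : p j < 1 := by
      have hij : i ≠ j := fun h => hji h.symm
      have hle : p i + p j ≤ ∑ k, p k := by
        rw [← Finset.sum_pair hij]
        exact Finset.sum_le_sum_of_subset_of_nonneg (Finset.subset_univ _)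
          (fun k _ _ => (hp k).le)
      rw [hpsum] at hle
      linarith [hp i]
    have h1pj : (0:ℝ) < 1 - p j := by linarith
    have hcj0 : c j0 = p j / p i := by
      show p (i.succAbove j0) / p i = p j / p i
      rw [hj0]
    set β : ℝ := (1 - p i - p j) / p i with hβ
    have hβsum : ∑ j' ∈ Finset.univ.erase j0, c j' = β := by
      have h2 : c j0 + ∑ j' ∈ Finset.univ.erase j0, c j' = ∑ j', c j' :=
        Finset.add_sum_erase _ _ (Finset.mem_univ j0)
      rw [hcsum, hcj0] at h2
      have h3 : ∑ j' ∈ Finset.univ.erase j0, c j' = (1 - p i) / p i - p j / p i := by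
        linarith
      rw [h3, hβ, div_sub_div_same]
    have hβ1 : β + 1 = (1 - p j) / p i := by
      rw [hβ]; field_simp [(hp i).ne']; ring
    have hβgt : (-1:ℝ) < β := by
      have : (0:ℝ) < (1 - p j) / p i := div_pos h1pj (hp i)
      linarith
    have hαβ : c j0 + β = (1 - p i) / p i := by
      rw [hcj0, hβ, ← add_div]
      ring_nf
    set T : Set (ℝ × (Fin n → ℝ)) :=
      {tv | tv.2 j0 ≤ r ∧ ∀ j', tv.2 j' < tv.1 ^ c j'} with hT
    have hTmeas : MeasurableSet T := by
      have : T = {tv : ℝ × (Fin n → ℝ) | tv.2 j0 ≤ r} ∩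
          ⋂ j', {tv : ℝ × (Fin n → ℝ) | tv.2 j' < tv.1 ^ c j'} := by
        ext tv; simp [hT, Set.mem_iInter]
      rw [this]
      refine MeasurableSet.inter ?_ (MeasurableSet.iInter fun j' => ?_)
      · exact measurableSet_le (by fun_prop) measurable_const
      · exact measurableSet_lt (by fun_prop) (by fun_prop)
    have hS : {u : Fin (n+1) → ℝ | u j ≤ r ∧ ∀ k, k ≠ i → u k < u i ^ (p k / p i)}
        = e ⁻¹' T := by
      ext u
      simp only [mem_preimage, mem_setOf_eq, hT]
      constructor
      · rintro ⟨h1, h2⟩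
        exact ⟨by show u (i.succAbove j0) ≤ r; rw [hj0]; exact h1,
          fun j' => h2 _ (Fin.succAbove_ne i j')⟩
      · rintro ⟨h1, h2⟩
        refine ⟨by rw [← hj0]; exact h1, fun k hk => ?_⟩
        obtain ⟨j', rfl⟩ := Fin.exists_succAbove_eq hk
        exact h2 j'
    rw [hS, ← MeasurableEquiv.map_apply e, hmp, Measure.prod_apply hTmeas]
    have hslice : ∀ t : ℝ, nu' (Prod.mk t ⁻¹' T)
        = nu' (univ.pi fun j' =>
            if j' = j0 then Iic r ∩ Iio (t ^ c j') else Iio (t ^ c j')) := by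
      intro t
      congr 1
      ext v
      simp only [mem_preimage, mem_setOf_eq, hT, Set.mem_pi, mem_univ, true_implies]
      constructor
      · rintro ⟨h1, h2⟩ j'
        by_cases hj' : j' = j0
        · rw [if_pos hj']; exact ⟨by rw [hj']; exact h1, h2 _⟩
        · rw [if_neg hj']; exact h2 j'
      · intro h
        refine ⟨?_, fun j' => ?_⟩
        · have := h j0; rw [if_pos rfl] at this; exact this.1
        · by_cases hj' : j' = j0
          · have := h j'; rw [if_pos hj'] at this
            exact this.2
          · have := h j'; rw [if_neg hj'] at this; exact this
    rw [lintegral_congr hslice]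
    have hcol : ∀ t ∈ Ioo (0:ℝ) 1,
        nu' (univ.pi fun j' =>
            if j' = j0 then Iic r ∩ Iio (t ^ c j') else Iio (t ^ c j'))
          = ENNReal.ofReal (min r (t ^ c j0) * t ^ β) := by
      intro t ht
      rw [hnu', Measure.pi_pi]
      have hle1 : ∀ j', t ^ c j' ≤ 1 :=
        fun j' => Real.rpow_le_one ht.1.le ht.2.le (hcpos j').le
      have hval : ∀ j', lam (if j' = j0 then Iic r ∩ Iio (t ^ c j') else Iio (t ^ c j'))
          = ENNReal.ofReal (if j' = j0 then min r (t ^ c j') else t ^ c j') := by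
        intro j'
        by_cases hj' : j' = j0
        · rw [if_pos hj', if_pos hj', lam_Iic_Iio (hle1 j')]
        · rw [if_neg hj', if_neg hj', lam_Iio (hle1 j')]
      simp_rw [hval]
      rw [← ENNReal.ofReal_prod_of_nonneg (fun j' _ => by
        split_ifs
        · exact le_min hr0 (Real.rpow_nonneg ht.1.le _)
        · exact Real.rpow_nonneg ht.1.le _)]
      rw [← Finset.mul_prod_erase Finset.univ _ (Finset.mem_univ j0), if_pos rfl]
      congr 1
      rw [Finset.prod_congr rfl (fun j' hj' => by
        rw [if_neg (Finset.ne_of_mem_erase hj')]),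
        ← Real.rpow_sum_of_pos ht.1, hβsum]
    rw [setLIntegral_congr_fun measurableSet_Ioo hcol]
    rcases eq_or_lt_of_le hr0 with hr | hr
    · -- r = 0
      have hz : ∀ t ∈ Ioo (0:ℝ) 1, ENNReal.ofReal (min r (t ^ c j0) * t ^ β) = 0 := by
        intro t ht
        rw [← hr, min_eq_left (Real.rpow_nonneg ht.1.le _), zero_mul, ofReal_zero]
      rw [setLIntegral_congr_fun measurableSet_Ioo hz,
        lintegral_zero, ← hr, Real.zero_rpow (one_div_ne_zero (hp j).ne')]
      norm_num
    · -- 0 < r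
      set t0 := r ^ (p i / p j) with ht0def
      have ht0pos : 0 < t0 := Real.rpow_pos_of_pos hr _
      have ht0le1 : t0 ≤ 1 := Real.rpow_le_one hr0 hr1 (div_nonneg (hp i).le (hp j).le)
      have ht0α : t0 ^ c j0 = r := by
        have hmulr : p i / p j * (p j / p i) = 1 := by
          rw [div_mul_div_comm, mul_comm (p j) (p i)]
          exact div_self (mul_ne_zero (hp i).ne' (hp j).ne')
        rw [ht0def, hcj0, ← Real.rpow_mul hr0, hmulr, Real.rpow_one]
      have hsplit : Ioo (0:ℝ) 1 = Ioo 0 t0 ∪ Ico t0 1 := by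
        ext t
        simp only [mem_Ioo, mem_union, mem_Ico]
        constructor
        · rintro ⟨h0, h1⟩
          rcases lt_or_ge t t0 with h | h
          · exact Or.inl ⟨h0, h⟩
          · exact Or.inr ⟨h, h1⟩
        · rintro (⟨h0, h⟩ | ⟨h, h1⟩)
          · exact ⟨h0, lt_of_lt_of_le h ht0le1⟩
          · exact ⟨lt_of_lt_of_le ht0pos h, h1⟩
      have hdisj : Disjoint (Ioo (0:ℝ) t0) (Ico t0 1) :=
        Set.disjoint_left.2 (fun t ht ht' => absurd ht.2 (not_lt.2 ht'.1))
      rw [hsplit, lintegral_union measurableSet_Ico hdisj]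
      have hpiece1 : ∫⁻ t in Ioo (0:ℝ) t0, ENNReal.ofReal (min r (t ^ c j0) * t ^ β)
          = ENNReal.ofReal (p i * r ^ (1 / p j)) := by
        have hcong : ∀ t ∈ Ioo (0:ℝ) t0, ENNReal.ofReal (min r (t ^ c j0) * t ^ β)
            = ENNReal.ofReal (t ^ ((1 - p i) / p i)) := by
          intro t ht
          have htα : t ^ c j0 < r := by
            rw [← ht0α]
            exact Real.rpow_lt_rpow ht.1.le ht.2 (hcpos j0)
          rw [min_eq_right htα.le, ← Real.rpow_add ht.1, hαβ]
        rw [setLIntegral_congr_fun measurableSet_Ioo hcong,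
          lint_rpow (by
            have h1 : (0:ℝ) ≤ (1 - p i) / p i := div_nonneg (by linarith) (hp i).le
            linarith) le_rfl ht0pos.le]
        have hexp : (1 - p i) / p i + 1 = 1 / p i := by field_simp [(hp i).ne']; ring
        rw [hexp, Real.zero_rpow (one_div_ne_zero (hp i).ne'), sub_zero]
        have ht0e : t0 ^ (1 / p i) = r ^ (1 / p j) := by
          rw [ht0def, ← Real.rpow_mul hr0]
          congr 1
          rw [div_mul_div_comm, mul_one, mul_comm (p j) (p i), ← div_div,
            div_self (hp i).ne']
        rw [ht0e]
        congr 1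
        rw [div_eq_mul_inv, one_div (p i), inv_inv]
        ring
      have hpiece2 : ∫⁻ t in Ico t0 1, ENNReal.ofReal (min r (t ^ c j0) * t ^ β)
          = ENNReal.ofReal (p i / (1 - p j) * (r - r ^ (1 / p j))) := by
        rw [setLIntegral_congr (Ioo_ae_eq_Ico).symm]
        have hcong : ∀ t ∈ Ioo t0 1, ENNReal.ofReal (min r (t ^ c j0) * t ^ β)
            = ENNReal.ofReal r * ENNReal.ofReal (t ^ β) := by
          intro t ht
          have hge : r ≤ t ^ c j0 := by
            rw [← ht0α]
            exact Real.rpow_le_rpow ht0pos.le ht.1.le (hcpos j0).le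
          rw [min_eq_left hge, ENNReal.ofReal_mul hr0]
        rw [setLIntegral_congr_fun measurableSet_Ioo hcong,
          lintegral_const_mul' _ _ ofReal_ne_top,
          lint_rpow hβgt ht0pos.le ht0le1, Real.one_rpow, ← ENNReal.ofReal_mul hr0]
        congr 1
        have h2 : t0 ^ (β + 1) = r ^ ((1 - p j) / p j) := by
          rw [hβ1, ht0def, ← Real.rpow_mul hr0]
          congr 1
          rw [div_mul_div_comm, mul_comm (p j) (p i), mul_div_mul_left _ _ (hp i).ne']
        have h3 : r * r ^ ((1 - p j) / p j) = r ^ (1 / p j) := by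
          have h4 : (1:ℝ) + (1 - p j) / p j = 1 / p j := by field_simp [(hp j).ne']; ring
          rw [← h4, Real.rpow_add hr, Real.rpow_one]
        rw [h2, hβ1, ← h3]
        field_simp
      rw [hpiece1, hpiece2,
        ← ENNReal.ofReal_add (mul_nonneg (hp i).le (Real.rpow_nonneg hr0 _)) ?_]
      · congr 1
        field_simp
        ring
      · refine mul_nonneg (div_nonneg (hp i).le h1pj.le) ?_
        have : r ^ (1 / p j) ≤ r := by
          have h5 : (1:ℝ) ≤ 1 / p j := one_le_one_div (hp j) hpj1.le
          calc r ^ (1 / p j) ≤ r ^ (1:ℝ) :=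
            Real.rpow_le_rpow_of_exponent_ge hr hr1 h5
          _ = r := Real.rpow_one r
        linarith


/-- Partial-inheritance Gumbel-max model: `U_1, …, U_m` are i.i.d.
`Uniform(0,1)`, `I = argmax_i (log U_i)/p_i`, `Q = (q_{ij})` is row-stochastic, and,
conditionally on `(U_1, …, U_m)`, the token `W` equals `j` with probability `q_{I j}`.
Then the pivotal statistic `Y = U_W` satisfies, for every `r ∈ [0,1]`,
`ℙ(Y ≤ r) = ∑_i ∑_{j ≠ i} [p_i/(1−p_j)] (r − p_j r^{1/p_j}) q_{ij} + ∑_i p_i r^{1/p_i} q_{ii}`. -/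
theorem stmt_3
    {Ω : Type*} [MeasurableSpace Ω] (μ : Measure Ω) [IsProbabilityMeasure μ]
    (m : ℕ) (hm : 2 ≤ m) (p : Fin m → ℝ)
    (hp : ∀ i, 0 < p i) (hpsum : ∑ i, p i = 1)
    (U : Fin m → Ω → ℝ) (hUmeas : ∀ i, Measurable (U i))
    (hUlaw : Measure.map (fun ω i => U i ω) μ
      = Measure.pi fun _ : Fin m => volume.restrict (Set.Ioo (0:ℝ) 1))
    (I : Ω → Fin m) (hImeas : Measurable I)
    (hI : ∀ᵐ ω ∂μ, ∀ j, j ≠ I ω →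
      Real.log (U j ω) / p j < Real.log (U (I ω) ω) / p (I ω))
    (q : Fin m → Fin m → ℝ) (hq0 : ∀ i j, 0 ≤ q i j) (hq1 : ∀ i, ∑ j, q i j = 1)
    (W : Ω → Fin m) (hWmeas : Measurable W)
    (hW : ∀ (j : Fin m) (A : Set (Fin m → ℝ)), MeasurableSet A →
      μ ({ω | W ω = j} ∩ (fun ω i => U i ω) ⁻¹' A)
        = ∫⁻ ω in (fun ω i => U i ω) ⁻¹' A, ENNReal.ofReal (q (I ω) j) ∂μ) :
    ∀ r ∈ Set.Icc (0:ℝ) 1,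
      μ {ω | U (W ω) ω ≤ r}
        = ENNReal.ofReal
            (∑ i, ∑ j ∈ Finset.univ \ {i},
                p i / (1 - p j) * (r - p j * r ^ (1 / p j)) * q i j
              + ∑ i, p i * r ^ (1 / p i) * q i i) := by
  obtain ⟨n, rfl⟩ := Nat.exists_eq_succ_of_ne_zero (by omega : m ≠ 0)
  intro r hr
  obtain ⟨hr0, hr1⟩ := hr
  set lam := volume.restrict (Ioo (0:ℝ) 1) with hlam
  set nu := Measure.pi fun _ : Fin (n+1) => lam with hnu
  set V : Ω → Fin (n+1) → ℝ := fun ω i => U i ω with hV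
  have hVmeas : Measurable V := measurable_pi_lambda _ hUmeas
  -- basic facts on p
  have hpa1 : ∀ a, p a ≤ 1 := fun a => by
    rw [← hpsum]
    exact Finset.single_le_sum (fun k _ => (hp k).le) (Finset.mem_univ a)
  have hplt1 : ∀ i j : Fin (n+1), j ≠ i → p j < 1 := by
    intro i j hji
    have hij : i ≠ j := fun h => hji h.symm
    have hle : p i + p j ≤ ∑ k, p k := by
      rw [← Finset.sum_pair hij]
      exact Finset.sum_le_sum_of_subset_of_nonneg (Finset.subset_univ _)
        (fun k _ _ => (hp k).le)
    rw [hpsum] at hle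
    linarith [hp i]
  have hrle : ∀ a : Fin (n+1), r ^ (1/p a) ≤ r := by
    intro a
    rcases eq_or_lt_of_le hr0 with h | h
    · rw [← h, Real.zero_rpow (one_div_ne_zero (hp a).ne')]
    · calc r ^ (1/p a) ≤ r ^ (1:ℝ) :=
          Real.rpow_le_rpow_of_exponent_ge h hr1 (one_le_one_div (hp a) (hpa1 a))
        _ = r := Real.rpow_one r
  have hterm0 : ∀ i j : Fin (n+1), j ≠ i →
      0 ≤ p i / (1 - p j) * (r - p j * r ^ (1/p j)) := by
    intro i j hji
    have h1 : p j < 1 := hplt1 i j hji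
    refine mul_nonneg (div_nonneg (hp i).le (by linarith)) ?_
    have h2 : p j * r ^ (1/p j) ≤ r :=
      calc p j * r ^ (1/p j) ≤ 1 * r ^ (1/p j) :=
            mul_le_mul_of_nonneg_right h1.le (Real.rpow_nonneg hr0 _)
        _ = r ^ (1/p j) := one_mul _
        _ ≤ r := hrle j
    linarith
  have hdiag0 : ∀ i : Fin (n+1), 0 ≤ p i * r ^ (1/p i) :=
    fun i => mul_nonneg (hp i).le (Real.rpow_nonneg hr0 _)
  -- sets
  set B : Fin (n+1) → Set (Fin (n+1) → ℝ) := fun j => {u | u j ≤ r} with hB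
  have hBmeas : ∀ j, MeasurableSet (B j) :=
    fun j => measurableSet_le (measurable_pi_apply j) measurable_const
  set A : Fin (n+1) → Set (Fin (n+1) → ℝ) := fun i =>
    {u | ∀ k, k ≠ i → Real.log (u k) / p k < Real.log (u i) / p i} with hA
  have hAmeas : ∀ i, MeasurableSet (A i) := by
    intro i
    have : A i = ⋂ k, {u : Fin (n+1) → ℝ |
        k ≠ i → Real.log (u k) / p k < Real.log (u i) / p i} := by
      ext u; simp [hA, Set.mem_iInter]
    rw [this]
    refine MeasurableSet.iInter fun k => ?_
    by_cases hk : k = i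
    · simp [hk]
    · have : {u : Fin (n+1) → ℝ |
          k ≠ i → Real.log (u k) / p k < Real.log (u i) / p i}
          = {u : Fin (n+1) → ℝ |
            Real.log (u k) / p k < Real.log (u i) / p i} := by
        ext u; simp [hk]
      rw [this]
      exact measurableSet_lt
        ((Real.measurable_log.comp (measurable_pi_apply k)).div_const _)
        ((Real.measurable_log.comp (measurable_pi_apply i)).div_const _)
  -- a.e. identification of {I = i}
  have hIeq : ∀ i, (I ⁻¹' {i} : Set Ω) =ᵐ[μ] V ⁻¹' (A i) := by
    intro i
    rw [Filter.eventuallyEq_set]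
    filter_upwards [hI] with ω hω
    constructor
    · intro h
      have h' : I ω = i := h
      intro k hk
      rw [← h'] at hk ⊢
      exact hω k hk
    · intro h
      by_contra hne
      have hne' : I ω ≠ i := hne
      have h1 := hω i (fun h' => hne' h'.symm)
      have h2 := h (I ω) hne'
      simp only [hV, mem_setOf_eq] at h2
      exact absurd h1 (not_lt.2 h2.le)
  -- decomposition of the event
  have hdecomp : {ω | U (W ω) ω ≤ r} = ⋃ j, ((W ⁻¹' {j}) ∩ V ⁻¹' (B j)) := by
    ext ω
    simp only [mem_setOf_eq, mem_iUnion, mem_inter_iff, mem_preimage, mem_singleton_iff]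
    constructor
    · intro h
      exact ⟨W ω, rfl, h⟩
    · rintro ⟨j, hj, h⟩
      rw [hj]
      exact h
  have hmeas_s : ∀ j : Fin (n+1), MeasurableSet ((W ⁻¹' {j}) ∩ V ⁻¹' (B j)) :=
    fun j => (hWmeas (measurableSet_singleton j)).inter (hVmeas (hBmeas j))
  have hdisj : Pairwise (Function.onFun Disjoint
      (fun j : Fin (n+1) => (W ⁻¹' {j}) ∩ V ⁻¹' (B j))) := by
    intro a b hab
    refine Set.disjoint_left.2 fun ω hωa hωb => hab ?_
    have h1 : W ω = a := hωa.1
    have h2 : W ω = b := hωb.1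
    rw [← h1, h2]
  rw [hdecomp, measure_iUnion hdisj hmeas_s, tsum_fintype]
  -- evaluate each term
  have hstep : ∀ j : Fin (n+1), μ ((W ⁻¹' {j}) ∩ V ⁻¹' (B j))
      = ∑ i, ENNReal.ofReal (q i j) * nu (A i ∩ B j) := by
    intro j
    have h1 : μ ((W ⁻¹' {j}) ∩ V ⁻¹' (B j))
        = ∫⁻ ω in V ⁻¹' (B j), ENNReal.ofReal (q (I ω) j) ∂μ := hW j (B j) (hBmeas j)
    have hfun : ∀ ω, ENNReal.ofReal (q (I ω) j)
        = ∑ i, (I ⁻¹' {i}).indicator (fun _ => ENNReal.ofReal (q i j)) ω := by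
      intro ω
      have h0 : ∀ b ∈ Finset.univ, b ≠ I ω →
          (I ⁻¹' {b}).indicator (fun _ => ENNReal.ofReal (q b j)) ω = 0 := by
        intro b _ hb
        apply indicator_of_notMem
        simp only [mem_preimage, mem_singleton_iff]
        exact fun h => hb h.symm
      rw [Finset.sum_eq_single_of_mem (I ω) (Finset.mem_univ _) h0,
        indicator_of_mem (show ω ∈ I ⁻¹' {I ω} from rfl)]
    rw [h1, lintegral_congr hfun, lintegral_finset_sum _ (fun i _ =>
      (measurable_const.indicator (hImeas (measurableSet_singleton i))))]
    refine Finset.sum_congr rfl fun i _ => ?_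
    rw [lintegral_indicator (hImeas (measurableSet_singleton i)),
      Measure.restrict_restrict (hImeas (measurableSet_singleton i)),
      setLIntegral_const]
    have h2 : μ (I ⁻¹' {i} ∩ V ⁻¹' (B j)) = μ (V ⁻¹' (A i ∩ B j)) := by
      rw [Set.preimage_inter]
      exact measure_congr ((hIeq i).inter (Filter.EventuallyEq.refl _ _))
    rw [h2]
    have h3 : μ (V ⁻¹' (A i ∩ B j)) = nu (A i ∩ B j) := by
      rw [← hUlaw, Measure.map_apply hVmeas ((hAmeas i).inter (hBmeas j))]
    rw [h3, mul_comm]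
  simp_rw [hstep]
  have hν : ∀ i j : Fin (n+1), nu (A i ∩ B j)
      = ENNReal.ofReal (if j = i then p i * r ^ (1/p i)
          else p i / (1 - p j) * (r - p j * r ^ (1/p j))) := by
    intro i j
    rw [← key p hp hpsum i j r hr0 hr1]
    set G : Set (Fin (n+1) → ℝ) := univ.pi (fun _ => Ioo (0:ℝ) 1) with hG
    have hGmeas : MeasurableSet G := MeasurableSet.univ_pi fun _ => measurableSet_Ioo
    have hGfull : nu Gᶜ = 0 := by
      have h1 : nu G = 1 := by
        rw [hnu, hG, Measure.pi_pi]
        have hl : lam (Ioo (0:ℝ) 1) = 1 := by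
          rw [hlam, Measure.restrict_apply measurableSet_Ioo, inter_self, Real.volume_Ioo]
          norm_num
        simp [hl]
      have h2 : nu univ = 1 := by
        rw [hnu, Measure.pi_univ]
        have hl : lam (univ : Set ℝ) = 1 := by
          rw [hlam, Measure.restrict_apply MeasurableSet.univ, univ_inter, Real.volume_Ioo]
          norm_num
        simp [hl]
      rw [measure_compl hGmeas (by rw [h1]; exact one_ne_top), h1, h2, tsub_self]
    have haeG : ∀ᵐ u ∂nu, u ∈ G := by
      rw [ae_iff]
      exact hGfull
    refine measure_congr ?_
    rw [Filter.eventuallyEq_set]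
    filter_upwards [haeG] with u hu
    have humem : ∀ k, u k ∈ Ioo (0:ℝ) 1 := fun k => hu k (mem_univ k)
    have hiff : ∀ k : Fin (n+1), k ≠ i →
        (Real.log (u k) / p k < Real.log (u i) / p i ↔ u k < u i ^ (p k / p i)) := by
      intro k _
      have hx := humem k
      have hy := humem i
      rw [div_lt_div_iff₀ (hp k) (hp i),
        show (u k < u i ^ (p k / p i)) ↔
            (Real.log (u k) < Real.log (u i ^ (p k / p i))) from
          (Real.log_lt_log_iff hx.1 (Real.rpow_pos_of_pos hy.1 _)).symm,
        Real.log_rpow hy.1, div_mul_eq_mul_div, lt_div_iff₀ (hp i),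
        mul_comm (p k) (Real.log (u i))]
    simp only [mem_inter_iff, hA, hB, mem_setOf_eq]
    constructor
    · rintro ⟨hAu, hBu⟩
      exact ⟨hBu, fun k hk => (hiff k hk).1 (hAu k hk)⟩
    · rintro ⟨hBu, hAu⟩
      exact ⟨fun k hk => (hiff k hk).2 (hAu k hk), hBu⟩
  simp_rw [hν]
  rw [Finset.sum_comm]
  have hRHSsum : ENNReal.ofReal
      (∑ i, ∑ j ∈ Finset.univ \ {i},
          p i / (1 - p j) * (r - p j * r ^ (1 / p j)) * q i j
        + ∑ i, p i * r ^ (1 / p i) * q i i)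
      = ∑ i : Fin (n+1), ((∑ j ∈ Finset.univ \ {i},
          ENNReal.ofReal (p i / (1 - p j) * (r - p j * r ^ (1 / p j)) * q i j))
        + ENNReal.ofReal (p i * r ^ (1 / p i) * q i i)) := by
    rw [ENNReal.ofReal_add, ENNReal.ofReal_sum_of_nonneg, ENNReal.ofReal_sum_of_nonneg,
      ← Finset.sum_add_distrib]
    · refine Finset.sum_congr rfl fun i _ => ?_
      congr 1
      rw [ENNReal.ofReal_sum_of_nonneg]
      intro j hj
      have hji : j ≠ i := by
        simp only [Finset.mem_sdiff, Finset.mem_singleton] at hj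
        exact hj.2
      exact mul_nonneg (hterm0 i j hji) (hq0 i j)
    · exact fun i _ => mul_nonneg (hdiag0 i) (hq0 i i)
    · intro i _
      refine Finset.sum_nonneg fun j hj => ?_
      have hji : j ≠ i := by
        simp only [Finset.mem_sdiff, Finset.mem_singleton] at hj
        exact hj.2
      exact mul_nonneg (hterm0 i j hji) (hq0 i j)
    · refine Finset.sum_nonneg fun i _ => Finset.sum_nonneg fun j hj => ?_
      have hji : j ≠ i := by
        simp only [Finset.mem_sdiff, Finset.mem_singleton] at hj
        exact hj.2
      exact mul_nonneg (hterm0 i j hji) (hq0 i j)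
    · exact Finset.sum_nonneg fun i _ => mul_nonneg (hdiag0 i) (hq0 i i)
  rw [hRHSsum]
  refine Finset.sum_congr rfl fun i _ => ?_
  rw [Finset.sum_eq_sum_sdiff_singleton_add (Finset.mem_univ i)]
  congr 1
  · refine Finset.sum_congr rfl fun j hj => ?_
    have hji : j ≠ i := by
      simp only [Finset.mem_sdiff, Finset.mem_singleton] at hj
      exact hj.2
    rw [if_neg hji, mul_comm, ← ENNReal.ofReal_mul (hterm0 i j hji)]
  · rw [if_pos rfl, mul_comm, ← ENNReal.ofReal_mul (hdiag0 i)]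
end

section
/- Consider n i.i.d. pairs (W_t, D_t), t = 1,…,n, where under H0 the key D_t is uniform on 𝒟 and W_t is uniform on {1,…,m}, independent of D_t, and under H1 the key D_t is uniform on 𝒟 and, conditionally on D_t, W_t is uniform on D_t. Then every measurable test φ : ({1,…,m} × 𝒟)^n → {0,1} satisfies ℙ_{H0}(φ(W_{1:n}, D_{1:n}) = 1) + ℙ_{H1}(φ(W_{1:n}, D_{1:n}) = 0) ≥ γ^n, and the test that rejects if and only if W_t ∈ D_t for every t ≤ n attains equality; hence the minimal possible sum of type I and type II errors equals γ^n, and the minimal asymptotic sum satisfies inf_φ limsup_{n→∞} (e_{φ,1} + e_{φ,2})^{1/n} = γ. -/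
open MeasureTheory Filter Set ENNReal

/-- Keys of the red-green-list watermark: subsets of `{1,…,m}` of size `g = γm`. -/
def RGKey (m g : ℕ) : Type := {A : Finset (Fin m) // A.card = g}

instance (m g : ℕ) : Fintype (RGKey m g) := by unfold RGKey; infer_instance
instance (m g : ℕ) : DecidableEq (RGKey m g) := by unfold RGKey; infer_instance

/-- Probability of a single outcome `(w, A)` under `H0`: the key `A` is uniform on the
collection of keys and the token `w` is uniform on `{1,…,m}`, independent of the key. -/
noncomputable def rgP0 (m g : ℕ) (_ : Fin m × RGKey m g) : ℝ :=
  ((m : ℝ) * (Fintype.card (RGKey m g) : ℝ))⁻¹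

/-- Probability of a single outcome `(w, A)` under `H1`: the key `A` is uniform on the
collection of keys and, conditionally on the key, the token is uniform on the key. -/
noncomputable def rgP1 (m g : ℕ) (x : Fin m × RGKey m g) : ℝ :=
  (Fintype.card (RGKey m g) : ℝ)⁻¹ * (if x.1 ∈ x.2.1 then (g : ℝ)⁻¹ else 0)

/-- Type I error of the test `φ` on `n` i.i.d. pairs: `ℙ_{H0}(φ = 1)`. -/
noncomputable def rgTypeI (m g n : ℕ) (φ : (Fin n → Fin m × RGKey m g) → Bool) : ℝ :=
  ∑ x : Fin n → Fin m × RGKey m g, (∏ t, rgP0 m g (x t)) * (if φ x then 1 else 0)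

/-- Type II error of the test `φ` on `n` i.i.d. pairs: `ℙ_{H1}(φ = 0)`. -/
noncomputable def rgTypeII (m g n : ℕ) (φ : (Fin n → Fin m × RGKey m g) → Bool) : ℝ :=
  ∑ x : Fin n → Fin m × RGKey m g, (∏ t, rgP1 m g (x t)) * (if φ x then 0 else 1)

/-- In the complete-inheritance red-green-list detection model with uniform
next-token-prediction distributions, every test `φ` satisfies
`e_{φ,1} + e_{φ,2} ≥ γ^n`; the test rejecting iff `W_t ∈ D_t` for every `t` attains equality;
hence the minimal possible sum of type I and type II errors equals `γ^n`, and the minimal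
asymptotic sum satisfies `inf_φ limsup (e_{φ,1}+e_{φ,2})^{1/n} = γ`. -/
theorem stmt_8
    (m g : ℕ) (hm : 2 ≤ m) (γ : ℝ) (hγ : γ ∈ Set.Ioo (0:ℝ) 1)
    (hg : (g : ℝ) = γ * m) :
    (∀ (n : ℕ) (φ : (Fin n → Fin m × RGKey m g) → Bool),
        γ ^ n ≤ rgTypeI m g n φ + rgTypeII m g n φ)
    ∧ (∀ n : ℕ,
        rgTypeI m g n (fun x => decide (∀ t, (x t).1 ∈ (x t).2.1))
          + rgTypeII m g n (fun x => decide (∀ t, (x t).1 ∈ (x t).2.1)) = γ ^ n)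
    ∧ (∀ n : ℕ,
        IsLeast {e : ℝ | ∃ φ : (Fin n → Fin m × RGKey m g) → Bool,
          e = rgTypeI m g n φ + rgTypeII m g n φ} (γ ^ n))
    ∧ (⨅ φ : (n : ℕ) → (Fin n → Fin m × RGKey m g) → Bool,
        Filter.limsup
          (fun n : ℕ => (rgTypeI m g n (φ n) + rgTypeII m g n (φ n)) ^ ((n : ℝ)⁻¹))
          atTop) = γ := by
  obtain ⟨hγ0, hγ1⟩ := hγ
  have hm0 : (0:ℝ) < m := by
    have : (0:ℕ) < m := by omega
    exact_mod_cast this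
  have hgR : (0:ℝ) < g := by rw [hg]; positivity
  have hg0 : 0 < g := by exact_mod_cast hgR
  have hgm : g < m := by
    have : (g:ℝ) < m := by rw [hg]; nlinarith
    exact_mod_cast this
  -- nonempty keys
  have hne : Nonempty (RGKey m g) := by
    obtain ⟨B, -, hB⟩ := Finset.exists_subset_card_eq (s := (Finset.univ : Finset (Fin m))) (n := g)
      (by simpa using hgm.le)
    exact ⟨⟨B, hB⟩⟩
  have hCnat : 0 < Fintype.card (RGKey m g) := Fintype.card_pos_iff.2 hne
  set C : ℝ := (Fintype.card (RGKey m g) : ℝ) with hCdef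
  have hC : 0 < C := by rw [hCdef]; exact_mod_cast hCnat
  have hγeq : γ = (g : ℝ) / m := by field_simp [hg]; linarith
  -- the minimum of the two single-letter likelihoods
  set q : Fin m × RGKey m g → ℝ :=
    fun x => if x.1 ∈ x.2.1 then ((m:ℝ) * C)⁻¹ else 0 with hqdef
  have hq_nonneg : ∀ x, 0 ≤ q x := by
    intro x; simp only [hqdef]; split <;> positivity
  have hq_le0 : ∀ x, q x ≤ rgP0 m g x := by
    intro x; simp only [hqdef, rgP0, ← hCdef]; split
    · exact le_rfl
    · positivity
  have hq_le1 : ∀ x, q x ≤ rgP1 m g x := by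
    intro x; simp only [hqdef, rgP1, ← hCdef]
    split
    · rw [← mul_inv]
      apply inv_anti₀ (by positivity)
      have : (g:ℝ) ≤ m := by exact_mod_cast hgm.le
      nlinarith
    · simp
  have hcard : ∀ A : RGKey m g, (A.1.card : ℝ) = g := by
    intro A; exact_mod_cast congrArg Nat.cast A.2
  -- single-letter sums
  have hsum_q : ∑ x, q x = γ := by
    rw [Fintype.sum_prod_type_right]
    have : ∀ A : RGKey m g, (∑ w : Fin m, q (w, A)) = (g:ℝ) * ((m:ℝ)*C)⁻¹ := by
      intro A
      simp only [hqdef]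
      rw [Finset.sum_ite_mem, Finset.univ_inter, Finset.sum_const, nsmul_eq_mul, hcard A]
    rw [Finset.sum_congr rfl (fun A _ => this A), Finset.sum_const, Finset.card_univ,
      nsmul_eq_mul, ← hCdef, hγeq]
    field_simp
  have hsum_p0 : ∑ x, rgP0 m g x = 1 := by
    simp only [rgP0, ← hCdef, Finset.sum_const, Finset.card_univ, nsmul_eq_mul,
      Fintype.card_prod, Fintype.card_fin]
    push_cast
    field_simp
    rfl
  have hsum_p1 : ∑ x, rgP1 m g x = 1 := by
    rw [Fintype.sum_prod_type_right]
    have : ∀ A : RGKey m g, (∑ w : Fin m, rgP1 m g (w, A)) = C⁻¹ := by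
      intro A
      simp only [rgP1, ← hCdef, ← Finset.mul_sum]
      rw [Finset.sum_ite_mem, Finset.univ_inter, Finset.sum_const, nsmul_eq_mul, hcard A]
      field_simp
    rw [Finset.sum_congr rfl (fun A _ => this A), Finset.sum_const, Finset.card_univ,
      nsmul_eq_mul, ← hCdef]
    field_simp
  -- tensorization
  have hpi : ∀ (n : ℕ) (f : Fin m × RGKey m g → ℝ),
      ∑ x : Fin n → Fin m × RGKey m g, ∏ t, f (x t) = (∑ x, f x) ^ n := by
    intro n f
    have := Finset.prod_univ_sum (fun _ : Fin n => (Finset.univ : Finset (Fin m × RGKey m g)))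
      (fun _ x => f x)
    simp only [Fintype.piFinset_univ] at this
    rw [← this, Finset.prod_const, Finset.card_univ, Fintype.card_fin]
  -- Part 1
  have part1 : ∀ (n : ℕ) (φ : (Fin n → Fin m × RGKey m g) → Bool),
      γ ^ n ≤ rgTypeI m g n φ + rgTypeII m g n φ := by
    intro n φ
    have key : ∀ x : Fin n → Fin m × RGKey m g,
        ∏ t, q (x t) ≤ (∏ t, rgP0 m g (x t)) * (if φ x then 1 else 0)
          + (∏ t, rgP1 m g (x t)) * (if φ x then 0 else 1) := by
      intro x
      cases hb : φ x
      · have := Finset.prod_le_prod (s := Finset.univ)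
          (fun t (_ : t ∈ Finset.univ) => hq_nonneg (x t)) (fun t _ => hq_le1 (x t))
        simpa [hb] using this
      · have := Finset.prod_le_prod (s := Finset.univ)
          (fun t (_ : t ∈ Finset.univ) => hq_nonneg (x t)) (fun t _ => hq_le0 (x t))
        simpa [hb] using this
    calc γ ^ n = ∑ x : Fin n → Fin m × RGKey m g, ∏ t, q (x t) := by rw [hpi n q, hsum_q]
      _ ≤ rgTypeI m g n φ + rgTypeII m g n φ := by
          rw [rgTypeI, rgTypeII, ← Finset.sum_add_distrib]
          exact Finset.sum_le_sum (fun x _ => key x)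
  -- Part 2
  have part2 : ∀ n : ℕ,
      rgTypeI m g n (fun x => decide (∀ t, (x t).1 ∈ (x t).2.1))
        + rgTypeII m g n (fun x => decide (∀ t, (x t).1 ∈ (x t).2.1)) = γ ^ n := by
    intro n
    have hI : rgTypeI m g n (fun x => decide (∀ t, (x t).1 ∈ (x t).2.1)) = γ ^ n := by
      rw [rgTypeI, ← hsum_q, ← hpi n q]
      apply Finset.sum_congr rfl
      intro x _
      by_cases h : ∀ t, (x t).1 ∈ (x t).2.1
      · rw [if_pos (by simpa using h), mul_one]
        apply Finset.prod_congr rfl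
        intro t _
        simp [hqdef, rgP0, h t, ← hCdef]
      · rw [if_neg (by simpa using h), mul_zero]
        push_neg at h
        obtain ⟨t, ht⟩ := h
        exact (Finset.prod_eq_zero (Finset.mem_univ t) (by simp [hqdef, ht])).symm
    have hII : rgTypeII m g n (fun x => decide (∀ t, (x t).1 ∈ (x t).2.1)) = 0 := by
      rw [rgTypeII]
      apply Finset.sum_eq_zero
      intro x _
      by_cases h : ∀ t, (x t).1 ∈ (x t).2.1
      · simp [h]
      · rw [mul_eq_zero]
        left
        push_neg at h
        obtain ⟨t, ht⟩ := h
        exact Finset.prod_eq_zero (Finset.mem_univ t) (by simp [rgP1, ht])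
    rw [hI, hII, add_zero]
  refine ⟨part1, part2, ?_, ?_⟩
  · intro n
    exact ⟨⟨_, (part2 n).symm⟩, by rintro e ⟨φ, rfl⟩; exact part1 n φ⟩
  -- Part 4
  · have herr_nonneg : ∀ (n : ℕ) (φ : (Fin n → Fin m × RGKey m g) → Bool),
        0 ≤ rgTypeI m g n φ + rgTypeII m g n φ := by
      intro n φ
      have h0 : 0 ≤ rgTypeI m g n φ := Finset.sum_nonneg fun x _ => by
        apply mul_nonneg
        · exact Finset.prod_nonneg fun t _ => by rw [rgP0]; positivity
        · split <;> norm_num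
      have h1 : 0 ≤ rgTypeII m g n φ := Finset.sum_nonneg fun x _ => by
        apply mul_nonneg
        · exact Finset.prod_nonneg fun t _ => by
            rw [rgP1]; apply mul_nonneg (by positivity); split <;> positivity
        · split <;> norm_num
      linarith
    have herr_le : ∀ (n : ℕ) (φ : (Fin n → Fin m × RGKey m g) → Bool),
        rgTypeI m g n φ + rgTypeII m g n φ ≤ 2 := by
      intro n φ
      have h0 : rgTypeI m g n φ ≤ 1 := by
        calc rgTypeI m g n φ ≤ ∑ x : Fin n → Fin m × RGKey m g, ∏ t, rgP0 m g (x t) := by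
              apply Finset.sum_le_sum
              intro x _
              have hp : 0 ≤ ∏ t, rgP0 m g (x t) :=
                Finset.prod_nonneg fun t _ => by rw [rgP0]; positivity
              split <;> nlinarith
          _ = 1 := by rw [hpi n, hsum_p0, one_pow]
      have h1 : rgTypeII m g n φ ≤ 1 := by
        calc rgTypeII m g n φ ≤ ∑ x : Fin n → Fin m × RGKey m g, ∏ t, rgP1 m g (x t) := by
              apply Finset.sum_le_sum
              intro x _
              have hp : 0 ≤ ∏ t, rgP1 m g (x t) :=
                Finset.prod_nonneg fun t _ => by
                  rw [rgP1]; apply mul_nonneg (by positivity); split <;> positivity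
              split <;> nlinarith
          _ = 1 := by rw [hpi n, hsum_p1, one_pow]
      linarith
    have hterm_ge : ∀ (φ : (n : ℕ) → (Fin n → Fin m × RGKey m g) → Bool) (n : ℕ), 1 ≤ n →
        γ ≤ (rgTypeI m g n (φ n) + rgTypeII m g n (φ n)) ^ ((n : ℝ)⁻¹) := by
      intro φ n hn
      have hnn : ((n:ℝ)) ≠ 0 := by positivity
      have h1 : γ ^ n ≤ rgTypeI m g n (φ n) + rgTypeII m g n (φ n) := part1 n (φ n)
      calc γ = ((γ:ℝ) ^ n) ^ ((n:ℝ)⁻¹) := by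
            rw [← Real.rpow_natCast γ n, ← Real.rpow_mul hγ0.le,
              mul_inv_cancel₀ hnn, Real.rpow_one]
        _ ≤ _ := Real.rpow_le_rpow (by positivity) h1 (by positivity)
    have hterm_le : ∀ (φ : (n : ℕ) → (Fin n → Fin m × RGKey m g) → Bool) (n : ℕ),
        (rgTypeI m g n (φ n) + rgTypeII m g n (φ n)) ^ ((n : ℝ)⁻¹) ≤ 2 := by
      intro φ n
      calc (rgTypeI m g n (φ n) + rgTypeII m g n (φ n)) ^ ((n : ℝ)⁻¹)
          ≤ (2:ℝ) ^ ((n : ℝ)⁻¹) :=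
            Real.rpow_le_rpow (herr_nonneg n (φ n)) (herr_le n (φ n)) (by positivity)
        _ ≤ (2:ℝ) ^ (1:ℝ) := by
            rcases Nat.eq_zero_or_pos n with h | h
            · subst h; norm_num
            · apply Real.rpow_le_rpow_of_exponent_le (by norm_num)
              exact inv_le_one_of_one_le₀ (by exact_mod_cast h)
        _ = 2 := Real.rpow_one 2
    have hlim_ge : ∀ φ : (n : ℕ) → (Fin n → Fin m × RGKey m g) → Bool,
        γ ≤ Filter.limsup
          (fun n : ℕ => (rgTypeI m g n (φ n) + rgTypeII m g n (φ n)) ^ ((n : ℝ)⁻¹)) atTop :=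
      fun φ =>
        Filter.le_limsup_of_frequently_le
          ((eventually_atTop.2 ⟨1, fun n hn => hterm_ge φ n hn⟩).frequently)
          (Filter.isBoundedUnder_of ⟨2, fun n => hterm_le φ n⟩)
    set Φopt : (n : ℕ) → (Fin n → Fin m × RGKey m g) → Bool :=
      fun n x => decide (∀ t, (x t).1 ∈ (x t).2.1) with hΦ
    have hopt : Filter.limsup
        (fun n : ℕ => (rgTypeI m g n (Φopt n) + rgTypeII m g n (Φopt n)) ^ ((n : ℝ)⁻¹))
        atTop = γ := by
      have hev : (fun n : ℕ =>
          (rgTypeI m g n (Φopt n) + rgTypeII m g n (Φopt n)) ^ ((n : ℝ)⁻¹))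
          =ᶠ[atTop] (fun _ => γ) := by
        filter_upwards [eventually_ge_atTop 1] with n hn
        have hnn : ((n:ℝ)) ≠ 0 := Nat.cast_ne_zero.mpr (by omega)
        rw [hΦ, part2 n, ← Real.rpow_natCast γ n, ← Real.rpow_mul hγ0.le,
          mul_inv_cancel₀ hnn, Real.rpow_one]
      rw [Filter.limsup_congr hev, Filter.limsup_const]
    refine le_antisymm ?_ (le_ciInf hlim_ge)
    rw [← hopt]
    exact ciInf_le ⟨γ, by rintro y ⟨φ, rfl⟩; exact hlim_ge φ⟩ Φopt
end

section
/- Let 0 < γ < θ < 1 and define a = (log(1−γ) − log(1−θ)) / (log θ + log(1−γ) − log γ − log(1−θ)). Then a ∈ (γ, θ) and d(a‖γ) = d(a‖θ). Let ψ_n be the test of X_{1:n} ∈ {0,1}^n that rejects if and only if ∑_{t=1}^n X_t ≥ ⌈na⌉. Then: (i) limsup_{n→∞} [ℙ_{Bernoulli(γ)^{⊗n}}(ψ_n = 1) + sup ℙ(ψ_n = 0)]^{1/n} = e^{−d(a‖γ)}, where the supremum is over all laws of independent X_t ∼ Bernoulli(θ_t) with θ_t ∈ [θ, 1]; and (ii)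 for every sequence of tests φ_n : {0,1}^n → {0,1}, limsup_{n→∞} [ℙ_{Bernoulli(γ)^{⊗n}}(φ_n = 1) + ℙ_{Bernoulli(θ)^{⊗n}}(φ_n = 0)]^{1/n} ≥ e^{−d(a‖γ)}. Hence the threshold test ψ_n asymptotically minimizes the sum of type I and type II errors among all tests. -/
open Filter Set

/-- Kullback–Leibler divergence `d(x‖y)` between `Bernoulli(x)` and `Bernoulli(y)`. -/
noncomputable def klBer (x y : ℝ) : ℝ :=
  x * Real.log (x / y) + (1 - x) * Real.log ((1 - x) / (1 - y))

/-- The critical level `a = (log(1−γ) − log(1−θ)) / (log θ + log(1−γ) − log γ − log(1−θ))`. -/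
noncomputable def acrit (γ θ : ℝ) : ℝ :=
  (Real.log (1 - γ) - Real.log (1 - θ)) /
    (Real.log θ + Real.log (1 - γ) - Real.log γ - Real.log (1 - θ))

/-- Probability of the outcome `x ∈ {0,1}^n` under independent `Bernoulli(θs t)` coordinates. -/
noncomputable def berWeight {n : ℕ} (θs : Fin n → ℝ) (x : Fin n → Bool) : ℝ :=
  ∏ t, if x t then θs t else 1 - θs t

/-- `ℙ(φ = 1)` when `X_{1:n}` are independent with `X_t ∼ Bernoulli(θs t)`. -/
noncomputable def rejProb {n : ℕ} (θs : Fin n → ℝ) (φ : (Fin n → Bool) → Bool) : ℝ :=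
  ∑ x : Fin n → Bool, berWeight θs x * (if φ x then 1 else 0)

/-- `ℙ(φ = 0)` when `X_{1:n}` are independent with `X_t ∼ Bernoulli(θs t)`. -/
noncomputable def accProb {n : ℕ} (θs : Fin n → ℝ) (φ : (Fin n → Bool) → Bool) : ℝ :=
  ∑ x : Fin n → Bool, berWeight θs x * (if φ x then 0 else 1)

/-- `∑_{t=1}^n X_t` for `x ∈ {0,1}^n`. -/
def countOnes {n : ℕ} (x : Fin n → Bool) : ℕ := ∑ t, if x t then 1 else 0

/-- The threshold test rejecting iff `∑_{t=1}^n X_t ≥ ⌈na⌉`. -/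
noncomputable def ceilTest (a : ℝ) (n : ℕ) : (Fin n → Bool) → Bool :=
  fun x => decide ((⌈(n : ℝ) * a⌉ : ℤ) ≤ (countOnes x : ℤ))




lemma klBer_pos {x y : ℝ} (hx0 : 0 < x) (hx1 : x < 1) (hy0 : 0 < y) (hy1 : y < 1)
    (hxy : x ≠ y) : 0 < klBer x y := by
  have h1x : (0:ℝ) < 1 - x := by linarith
  have h1y : (0:ℝ) < 1 - y := by linarith
  have h1 : Real.log (y / x) < y / x - 1 :=
    Real.log_lt_sub_one_of_pos (by positivity) (by
      intro h; apply hxy; field_simp at h; linarith)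
  have h2 : Real.log ((1 - y) / (1 - x)) < (1 - y) / (1 - x) - 1 :=
    Real.log_lt_sub_one_of_pos (by positivity) (by
      intro h; apply hxy; field_simp at h; linarith)
  have e1 : Real.log (x / y) = - Real.log (y / x) := by
    rw [Real.log_div hx0.ne' hy0.ne', Real.log_div hy0.ne' hx0.ne']; ring
  have e2 : Real.log ((1-x) / (1-y)) = - Real.log ((1-y) / (1-x)) := by
    rw [Real.log_div h1x.ne' h1y.ne', Real.log_div h1y.ne' h1x.ne']; ring
  have hb1 : x * Real.log (y / x) < y - x := by
    have := (mul_lt_mul_of_pos_left h1 hx0)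
    calc x * Real.log (y/x) < x * (y/x - 1) := this
    _ = y - x := by field_simp
  have hb2 : (1-x) * Real.log ((1-y)/(1-x)) < x - y := by
    have := (mul_lt_mul_of_pos_left h2 h1x)
    calc (1-x) * Real.log ((1-y)/(1-x)) < (1-x) * ((1-y)/(1-x) - 1) := this
    _ = x - y := by field_simp; ring
  unfold klBer
  rw [e1, e2]; nlinarith

lemma Dpos {γ θ : ℝ} (h0γ : 0 < γ) (hγθ : γ < θ) (hθ1 : θ < 1) : 0 < Real.log θ + Real.log (1 - γ) - Real.log γ - Real.log (1 - θ) := by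
  have h1 : Real.log γ < Real.log θ := Real.log_lt_log h0γ hγθ
  have h2 : Real.log (1 - θ) < Real.log (1 - γ) := Real.log_lt_log (by linarith) (by linarith)
  linarith

lemma acrit_mem {γ θ : ℝ} (h0γ : 0 < γ) (hγθ : γ < θ) (hθ1 : θ < 1) : acrit γ θ ∈ Set.Ioo γ θ := by
  have hθ0 : (0:ℝ) < θ := lt_trans h0γ hγθ
  have hγ1 : γ < 1 := lt_trans hγθ hθ1
  have hD := Dpos h0γ hγθ hθ1
  set D := Real.log θ + Real.log (1 - γ) - Real.log γ - Real.log (1 - θ) with hDdef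
  have h1γ : (0:ℝ) < 1 - γ := by linarith
  have h1θ : (0:ℝ) < 1 - θ := by linarith
  have hkl1 : 0 < klBer γ θ := klBer_pos h0γ hγ1 hθ0 hθ1 (ne_of_lt hγθ)
  have hkl2 : 0 < klBer θ γ := klBer_pos hθ0 hθ1 h0γ hγ1 (ne_of_gt hγθ)
  have e1 : klBer γ θ = (Real.log (1-γ) - Real.log (1-θ)) - γ * D := by
    unfold klBer
    rw [Real.log_div h0γ.ne' hθ0.ne', Real.log_div h1γ.ne' h1θ.ne', hDdef]; ring
  have e2 : klBer θ γ = θ * D - (Real.log (1-γ) - Real.log (1-θ)) := by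
    unfold klBer
    rw [Real.log_div hθ0.ne' h0γ.ne', Real.log_div h1θ.ne' h1γ.ne', hDdef]; ring
  constructor
  · rw [acrit, lt_div_iff₀ hD]; nlinarith
  · rw [acrit, div_lt_iff₀ hD]; nlinarith

lemma klBer_acrit_eq {γ θ : ℝ} (h0γ : 0 < γ) (hγθ : γ < θ) (hθ1 : θ < 1) : klBer (acrit γ θ) γ = klBer (acrit γ θ) θ := by
  have hθ0 : (0:ℝ) < θ := lt_trans h0γ hγθ
  have hγ1 : γ < 1 := lt_trans hγθ hθ1
  have hD := Dpos h0γ hγθ hθ1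
  have h1γ : (0:ℝ) < 1 - γ := by linarith
  have h1θ : (0:ℝ) < 1 - θ := by linarith
  obtain ⟨ha1, ha2⟩ := acrit_mem h0γ hγθ hθ1
  have ha0 : 0 < acrit γ θ := lt_trans h0γ ha1
  have ha1' : acrit γ θ < 1 := lt_trans ha2 hθ1
  have h1a : (0:ℝ) < 1 - acrit γ θ := by linarith
  set a := acrit γ θ with hadef
  have key : a * (Real.log θ + Real.log (1 - γ) - Real.log γ - Real.log (1 - θ))
      = Real.log (1-γ) - Real.log (1-θ) := by
    rw [hadef, acrit, div_mul_cancel₀ _ hD.ne']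
  unfold klBer
  rw [Real.log_div ha0.ne' h0γ.ne', Real.log_div ha0.ne' hθ0.ne',
    Real.log_div h1a.ne' h1γ.ne', Real.log_div h1a.ne' h1θ.ne']
  nlinarith [key]



lemma sum_prod_bool {n : ℕ} (f : Fin n → Bool → ℝ) :
    ∑ x : Fin n → Bool, ∏ t, f t (x t) = ∏ t, (f t true + f t false) := by
  have := Finset.prod_univ_sum (fun _ : Fin n => (Finset.univ : Finset Bool)) (fun t b => f t b)
  rw [Fintype.piFinset_univ] at this
  rw [← this]
  exact Finset.prod_congr rfl (fun t _ => by simp [Fintype.sum_bool])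

lemma berWeight_nonneg {n : ℕ} {θs : Fin n → ℝ} (h : ∀ t, 0 ≤ θs t ∧ θs t ≤ 1)
    (x : Fin n → Bool) : 0 ≤ berWeight θs x := by
  apply Finset.prod_nonneg
  intro t _
  rcases (h t) with ⟨h1, h2⟩
  cases hx : x t <;> simp [hx] <;> linarith

lemma sum_berWeight {n : ℕ} (θs : Fin n → ℝ) : ∑ x : Fin n → Bool, berWeight θs x = 1 := by
  have h := sum_prod_bool (n := n) (fun t b => if b then θs t else 1 - θs t)
  have h2 : ∀ t : Fin n, θs t + (1 - θs t) = 1 := fun t => by ring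
  simpa [berWeight, h2] using h

lemma countOnes_le {n : ℕ} (x : Fin n → Bool) : countOnes x ≤ n := by
  unfold countOnes
  calc ∑ t, (if x t then 1 else 0) ≤ ∑ _t : Fin n, 1 :=
    Finset.sum_le_sum (fun t _ => by split <;> omega)
  _ = n := by simp

lemma countOnes_eq_card {n : ℕ} (x : Fin n → Bool) :
    countOnes x = (Finset.univ.filter (fun t => x t = true)).card := by
  rw [Finset.card_filter]
  unfold countOnes
  exact Finset.sum_congr rfl (fun t _ => by by_cases h : x t = true <;> simp [h])

lemma berWeight_const {n : ℕ} (p : ℝ) (x : Fin n → Bool) :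
    berWeight (fun _ => p) x = p ^ (countOnes x) * (1-p) ^ (n - countOnes x) := by
  unfold berWeight
  rw [Finset.prod_ite (f := fun _ => p) (g := fun _ => 1 - p)]
  rw [Finset.prod_const, Finset.prod_const, countOnes_eq_card]
  congr 2
  have := Finset.card_filter_add_card_filter_not
    (s := (Finset.univ : Finset (Fin n))) (p := fun t => x t = true)
  simp only [Finset.card_univ, Fintype.card_fin] at this
  omega

lemma card_countOnes_eq {n k : ℕ} :
    ((Finset.univ : Finset (Fin n → Bool)).filter (fun x => countOnes x = k)).card
      = n.choose k := by
  have hc : (Finset.powersetCard k (Finset.univ : Finset (Fin n))).card = n.choose k := by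
    rw [Finset.card_powersetCard]; simp
  rw [← hc]
  refine Finset.card_nbij' (fun x => Finset.univ.filter (fun t => x t = true))
      (fun S => fun t => decide (t ∈ S)) ?_ ?_ ?_ ?_
  · intro x hx
    simp only [Finset.mem_coe, Finset.mem_filter, Finset.mem_univ, true_and] at hx
    rw [Finset.mem_coe, Finset.mem_powersetCard]
    exact ⟨Finset.filter_subset _ _, by rw [← countOnes_eq_card, hx]⟩
  · intro S hS
    rw [Finset.mem_coe, Finset.mem_powersetCard] at hS
    simp only [Finset.mem_coe, Finset.mem_filter, Finset.mem_univ, true_and]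
    rw [countOnes_eq_card, ← hS.2]
    congr 1
    ext t; simp
  · intro x hx; funext t; simp
  · intro S hS; ext t; simp


lemma nat_step_up {n k j : ℕ} (hj : j + 1 ≤ k) (hk : k ≤ n) :
    n.choose j * (n - k) ≤ n.choose (j + 1) * k := by
  have h := Nat.choose_succ_right_eq n j
  refine Nat.le_of_mul_le_mul_right ?_ (Nat.succ_pos j)
  calc n.choose j * (n - k) * (j + 1) = n.choose j * ((n - k) * (j + 1)) := by ring
  _ ≤ n.choose j * ((n - j) * k) := by
      apply Nat.mul_le_mul_left
      exact Nat.mul_le_mul (Nat.sub_le_sub_left (le_of_lt hj) n) hj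
  _ = n.choose j * (n - j) * k := by ring
  _ = n.choose (j + 1) * (j + 1) * k := by rw [h]
  _ = n.choose (j + 1) * k * (j + 1) := by ring

lemma nat_step_down {n k j : ℕ} (hj : k ≤ j) (hn : j + 1 ≤ n) :
    n.choose (j + 1) * k ≤ n.choose j * (n - k) := by
  have h := Nat.choose_succ_right_eq n j
  refine Nat.le_of_mul_le_mul_right ?_ (Nat.succ_pos j)
  calc n.choose (j + 1) * k * (j + 1) = n.choose (j + 1) * (j + 1) * k := by ring
  _ = n.choose j * ((n - j) * k) := by rw [h]; ring
  _ ≤ n.choose j * ((n - k) * (j + 1)) := by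
      apply Nat.mul_le_mul_left
      exact Nat.mul_le_mul (Nat.sub_le_sub_left hj n) (Nat.le_succ_of_le hj)
  _ = n.choose j * (n - k) * (j + 1) := by ring

-- the binomial term function
noncomputable def binTerm (n : ℕ) (p : ℝ) (j : ℕ) : ℝ :=
  (n.choose j : ℝ) * p ^ j * (1 - p) ^ (n - j)

lemma binTerm_le_mode {n k : ℕ} (hn : 0 < n) (hk : k ≤ n) (j : ℕ) :
    binTerm n ((k : ℝ) / n) j ≤ binTerm n ((k : ℝ) / n) k := by
  have hn' : (0:ℝ) < n := by exact_mod_cast hn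
  have cast1p : 1 - (k : ℝ) / n = ((n - k : ℕ) : ℝ) / n := by
    rw [Nat.cast_sub hk]; field_simp
  set p : ℝ := (k : ℝ) / n with hp
  have hp0 : 0 ≤ p := by positivity
  have hp1 : 0 ≤ 1 - p := by
    rw [hp, sub_nonneg, div_le_one hn']; exact_mod_cast hk
  -- step up
  have step_up : ∀ i, i + 1 ≤ k → binTerm n p i ≤ binTerm n p (i + 1) := by
    intro i hi
    have hnat := nat_step_up (n := n) hi hk
    have hreal : (n.choose i : ℝ) * (1 - p) ≤ (n.choose (i+1) : ℝ) * p := by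
      rw [hp, cast1p, ← mul_div_assoc, ← mul_div_assoc, div_le_div_iff₀ hn' hn']
      exact_mod_cast mul_le_mul_left hnat n
    have hni : n - i = (n - (i+1)) + 1 := by omega
    have F0 : (0:ℝ) ≤ p ^ i * (1 - p) ^ (n - (i+1)) := by positivity
    calc binTerm n p i = ((n.choose i : ℝ) * (1 - p)) * (p ^ i * (1 - p) ^ (n - (i+1))) := by
          rw [binTerm, hni, pow_succ]; ring
    _ ≤ ((n.choose (i+1) : ℝ) * p) * (p ^ i * (1 - p) ^ (n - (i+1))) :=
          mul_le_mul_of_nonneg_right hreal F0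
    _ = binTerm n p (i + 1) := by rw [binTerm, pow_succ]; ring
  have step_down : ∀ i, k ≤ i → i + 1 ≤ n → binTerm n p (i + 1) ≤ binTerm n p i := by
    intro i hi hin
    have hnat := nat_step_down (n := n) hi hin
    have hreal : (n.choose (i+1) : ℝ) * p ≤ (n.choose i : ℝ) * (1 - p) := by
      rw [hp, cast1p, ← mul_div_assoc, ← mul_div_assoc, div_le_div_iff₀ hn' hn']
      exact_mod_cast mul_le_mul_left hnat n
    have hni : n - i = (n - (i+1)) + 1 := by omega
    have F0 : (0:ℝ) ≤ p ^ i * (1 - p) ^ (n - (i+1)) := by positivity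
    calc binTerm n p (i + 1) = ((n.choose (i+1) : ℝ) * p) * (p ^ i * (1 - p) ^ (n - (i+1))) := by
          rw [binTerm, pow_succ]; ring
    _ ≤ ((n.choose i : ℝ) * (1 - p)) * (p ^ i * (1 - p) ^ (n - (i+1))) :=
          mul_le_mul_of_nonneg_right hreal F0
    _ = binTerm n p i := by rw [binTerm, hni, pow_succ]; ring
  rcases le_or_gt j k with hjk | hkj
  · -- j ≤ k : increasing
    have key : ∀ m, m ≤ k → binTerm n p (k - m) ≤ binTerm n p k := by
      intro m
      induction m with
      | zero => intro _; simp
      | succ m ih =>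
        intro hm
        have h1 : k - (m+1) + 1 = k - m := by omega
        calc binTerm n p (k - (m+1)) ≤ binTerm n p (k - (m+1) + 1) :=
              step_up _ (by omega)
        _ = binTerm n p (k - m) := by rw [h1]
        _ ≤ binTerm n p k := ih (by omega)
    have := key (k - j) (by omega)
    rwa [Nat.sub_sub_self hjk] at this
  · -- k < j
    rcases le_or_gt j n with hjn | hnj
    · have key : ∀ m, k + m ≤ n → binTerm n p (k + m) ≤ binTerm n p k := by
        intro m
        induction m with
        | zero => intro _; simp
        | succ m ih =>
          intro hm
          calc binTerm n p (k + (m+1)) = binTerm n p ((k + m) + 1) := by ring_nf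
          _ ≤ binTerm n p (k + m) := step_down _ (by omega) (by omega)
          _ ≤ binTerm n p k := ih (by omega)
      have := key (j - k) (by omega)
      rwa [Nat.add_sub_cancel' (le_of_lt hkj)] at this
    · have : n.choose j = 0 := Nat.choose_eq_zero_of_lt hnj
      rw [binTerm, this]
      simp only [Nat.cast_zero, zero_mul]
      rw [binTerm]; positivity

lemma one_le_succ_mul_mode {n k : ℕ} (hn : 0 < n) (hk : k ≤ n) :
    1 ≤ ((n : ℝ) + 1) * binTerm n ((k : ℝ) / n) k := by
  set p : ℝ := (k : ℝ) / n with hp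
  have hsum : ∑ j ∈ Finset.range (n + 1), binTerm n p j = 1 := by
    have h := add_pow p (1 - p) n
    simp only [add_sub_cancel, one_pow] at h
    calc ∑ j ∈ Finset.range (n + 1), binTerm n p j
        = ∑ j ∈ Finset.range (n + 1), p ^ j * (1 - p) ^ (n - j) * (n.choose j : ℝ) :=
          Finset.sum_congr rfl (fun j _ => by rw [binTerm]; ring)
    _ = 1 := h.symm
  have hb : ∀ j ∈ Finset.range (n + 1), binTerm n p j ≤ binTerm n p k :=
    fun j _ => binTerm_le_mode hn hk j
  have := Finset.sum_le_card_nsmul (Finset.range (n + 1)) _ _ hb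
  rw [hsum, Finset.card_range] at this
  calc (1:ℝ) ≤ (n + 1) • binTerm n p k := this
  _ = ((n:ℝ) + 1) * binTerm n p k := by
      rw [nsmul_eq_mul]; push_cast; ring


lemma prod_exp_count {n : ℕ} (lam : ℝ) (x : Fin n → Bool) :
    ∏ t, (if x t then Real.exp lam else 1) = Real.exp (lam * countOnes x) := by
  rw [countOnes]
  push_cast
  rw [Finset.mul_sum, Real.exp_sum]
  exact Finset.prod_congr rfl fun t _ => by
    cases hx : x t <;> simp [hx]

lemma berWeight_mul_exp {n : ℕ} (θs : Fin n → ℝ) (lam : ℝ) (x : Fin n → Bool) :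
    berWeight θs x * Real.exp (lam * countOnes x)
      = ∏ t, (if x t then θs t * Real.exp lam else (1 - θs t)) := by
  rw [← prod_exp_count lam x, berWeight, ← Finset.prod_mul_distrib]
  exact Finset.prod_congr rfl fun t _ => by cases hx : x t <;> simp [hx]

lemma sum_exp_weight {n : ℕ} (θs : Fin n → ℝ) (lam : ℝ) :
    ∑ x : Fin n → Bool, berWeight θs x * Real.exp (lam * countOnes x)
      = ∏ t, (θs t * Real.exp lam + (1 - θs t)) := by
  have h := sum_prod_bool (n := n) (fun t b => if b then θs t * Real.exp lam else (1 - θs t))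
  simp_rw [berWeight_mul_exp θs lam]
  simpa using h

lemma chernoff_rej {n : ℕ} {γ : ℝ} (h0 : 0 ≤ γ) (h1 : γ ≤ 1) (a lam : ℝ) (hlam : 0 ≤ lam) :
    rejProb (fun _ : Fin n => γ) (ceilTest a n)
      ≤ Real.exp (-(lam * ((n:ℝ) * a))) * (γ * Real.exp lam + (1 - γ)) ^ n := by
  have hw : ∀ x, 0 ≤ berWeight (fun _ : Fin n => γ) x :=
    berWeight_nonneg (fun t => ⟨h0, h1⟩)
  have key : ∀ x : Fin n → Bool,
      berWeight (fun _ : Fin n => γ) x * (if ceilTest a n x then 1 else 0)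
      ≤ Real.exp (-(lam * ((n:ℝ) * a)))
        * (berWeight (fun _ : Fin n => γ) x * Real.exp (lam * countOnes x)) := by
    intro x
    by_cases hx : ceilTest a n x
    · rw [if_pos hx]
      have hcount : (n:ℝ) * a ≤ countOnes x := by
        rw [ceilTest] at hx
        simp only [decide_eq_true_eq] at hx
        calc (n:ℝ) * a ≤ (⌈(n:ℝ) * a⌉ : ℝ) := Int.le_ceil _
        _ ≤ countOnes x := by exact_mod_cast hx
      have h2 : (1:ℝ) ≤ Real.exp (-(lam * ((n:ℝ) * a))) * Real.exp (lam * countOnes x) := by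
        rw [← Real.exp_add, ← Real.exp_zero]
        apply Real.exp_le_exp.2
        nlinarith
      have := mul_le_mul_of_nonneg_left h2 (hw x)
      calc berWeight (fun _ : Fin n => γ) x * 1 = berWeight (fun _ : Fin n => γ) x * 1 := rfl
      _ ≤ berWeight (fun _ : Fin n => γ) x
            * (Real.exp (-(lam * ((n:ℝ) * a))) * Real.exp (lam * countOnes x)) := by
          rw [mul_one]; simpa using this
      _ = Real.exp (-(lam * ((n:ℝ) * a)))
            * (berWeight (fun _ : Fin n => γ) x * Real.exp (lam * countOnes x)) := by ring
    · rw [if_neg hx, mul_zero]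
      exact mul_nonneg (Real.exp_pos _).le (mul_nonneg (hw x) (Real.exp_pos _).le)
  calc rejProb (fun _ : Fin n => γ) (ceilTest a n)
      ≤ ∑ x : Fin n → Bool, Real.exp (-(lam * ((n:ℝ) * a)))
          * (berWeight (fun _ : Fin n => γ) x * Real.exp (lam * countOnes x)) :=
        Finset.sum_le_sum (fun x _ => key x)
  _ = Real.exp (-(lam * ((n:ℝ) * a)))
        * ∑ x : Fin n → Bool, berWeight (fun _ : Fin n => γ) x * Real.exp (lam * countOnes x) := by
      rw [Finset.mul_sum]
  _ = Real.exp (-(lam * ((n:ℝ) * a))) * (γ * Real.exp lam + (1 - γ)) ^ n := by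
      rw [sum_exp_weight, Finset.prod_const, Finset.card_univ, Fintype.card_fin]

lemma chernoff_acc {n : ℕ} (θs : Fin n → ℝ) (h : ∀ t, 0 ≤ θs t ∧ θs t ≤ 1) (a lam : ℝ)
    (hlam : 0 ≤ lam) :
    accProb θs (ceilTest a n)
      ≤ Real.exp (lam * ((n:ℝ) * a)) * ∏ t, (θs t * Real.exp (-lam) + (1 - θs t)) := by
  have hw : ∀ x, 0 ≤ berWeight θs x := berWeight_nonneg h
  have key : ∀ x : Fin n → Bool,
      berWeight θs x * (if ceilTest a n x then 0 else 1)
      ≤ Real.exp (lam * ((n:ℝ) * a)) * (berWeight θs x * Real.exp ((-lam) * countOnes x)) := by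
    intro x
    by_cases hx : ceilTest a n x
    · rw [if_pos hx, mul_zero]
      exact mul_nonneg (Real.exp_pos _).le (mul_nonneg (hw x) (Real.exp_pos _).le)
    · rw [if_neg hx]
      have hcount : (countOnes x : ℝ) ≤ (n:ℝ) * a := by
        rw [ceilTest] at hx
        simp only [decide_eq_true_eq, not_le] at hx
        have h1 : (countOnes x : ℤ) + 1 ≤ ⌈(n:ℝ) * a⌉ := hx
        have h2 : ((⌈(n:ℝ) * a⌉ : ℤ) : ℝ) < (n:ℝ) * a + 1 := Int.ceil_lt_add_one _
        have h3 : ((countOnes x : ℤ) : ℝ) + 1 ≤ ((⌈(n:ℝ) * a⌉ : ℤ) : ℝ) := by exact_mod_cast h1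
        push_cast at h3 ⊢
        linarith
      have h2 : (1:ℝ) ≤ Real.exp (lam * ((n:ℝ) * a)) * Real.exp ((-lam) * countOnes x) := by
        rw [← Real.exp_add, ← Real.exp_zero]
        apply Real.exp_le_exp.2
        nlinarith
      have := mul_le_mul_of_nonneg_left h2 (hw x)
      calc berWeight θs x * 1 = berWeight θs x := mul_one _
      _ ≤ berWeight θs x
            * (Real.exp (lam * ((n:ℝ) * a)) * Real.exp ((-lam) * countOnes x)) := by
          simpa using this
      _ = Real.exp (lam * ((n:ℝ) * a))
            * (berWeight θs x * Real.exp ((-lam) * countOnes x)) := by ring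
  calc accProb θs (ceilTest a n)
      ≤ ∑ x : Fin n → Bool, Real.exp (lam * ((n:ℝ) * a))
          * (berWeight θs x * Real.exp ((-lam) * countOnes x)) :=
        Finset.sum_le_sum (fun x _ => key x)
  _ = Real.exp (lam * ((n:ℝ) * a))
        * ∑ x : Fin n → Bool, berWeight θs x * Real.exp ((-lam) * countOnes x) := by
      rw [Finset.mul_sum]
  _ = Real.exp (lam * ((n:ℝ) * a)) * ∏ t, (θs t * Real.exp (-lam) + (1 - θs t)) := by
      rw [sum_exp_weight]

lemma weight_exp_form {n : ℕ} {p : ℝ} (hp0 : 0 < p) (hp1 : p < 1) (x : Fin n → Bool) :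
    berWeight (fun _ => p) x
      = Real.exp ((countOnes x : ℝ) * Real.log p
          + ((n : ℝ) - countOnes x) * Real.log (1 - p)) := by
  have h1p : (0:ℝ) < 1 - p := by linarith
  have hc := countOnes_le x
  rw [berWeight_const, Real.exp_add]
  congr 1
  · rw [Real.exp_nat_mul, Real.exp_log hp0]
  · rw [show ((n : ℝ) - countOnes x) = ((n - countOnes x : ℕ) : ℝ) by
        rw [Nat.cast_sub hc]]
    rw [Real.exp_nat_mul, Real.exp_log h1p]


lemma weight_mono {γ θ : ℝ} (h0γ : 0 < γ) (hγθ : γ < θ) (hθ1 : θ < 1) {n : ℕ}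
    (x : Fin n → Bool) (hcount : (n:ℝ) * acrit γ θ ≤ countOnes x) :
    berWeight (fun _ : Fin n => γ) x ≤ berWeight (fun _ : Fin n => θ) x := by
  have hθ0 : (0:ℝ) < θ := lt_trans h0γ hγθ
  have hγ1 : γ < 1 := lt_trans hγθ hθ1
  have hD := Dpos h0γ hγθ hθ1
  have key : acrit γ θ * (Real.log θ + Real.log (1 - γ) - Real.log γ - Real.log (1 - θ))
      = Real.log (1-γ) - Real.log (1-θ) := by
    rw [acrit, div_mul_cancel₀ _ hD.ne']
  have hcD : ((n:ℝ)) * (Real.log (1-γ) - Real.log (1-θ))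
      ≤ (countOnes x : ℝ) * (Real.log θ + Real.log (1 - γ) - Real.log γ - Real.log (1 - θ)) := by
    calc (n:ℝ) * (Real.log (1-γ) - Real.log (1-θ))
        = ((n:ℝ) * acrit γ θ)
            * (Real.log θ + Real.log (1 - γ) - Real.log γ - Real.log (1 - θ)) := by
          rw [← key]; ring
    _ ≤ _ := mul_le_mul_of_nonneg_right hcount hD.le
  rw [weight_exp_form h0γ hγ1, weight_exp_form hθ0 hθ1]
  apply Real.exp_le_exp.2
  nlinarith [hcD]

lemma test_lower {γ θ : ℝ} (h0γ : 0 < γ) (hγθ : γ < θ) (hθ1 : θ < 1) {n : ℕ} (hn : 0 < n)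
    (φ : (Fin n → Bool) → Bool) :
    (n.choose (⌈(n:ℝ) * acrit γ θ⌉.toNat) : ℝ) * γ ^ (⌈(n:ℝ) * acrit γ θ⌉.toNat)
        * (1 - γ) ^ (n - ⌈(n:ℝ) * acrit γ θ⌉.toNat)
      ≤ rejProb (fun _ : Fin n => γ) φ + accProb (fun _ : Fin n => θ) φ := by
  set k := ⌈(n:ℝ) * acrit γ θ⌉.toNat with hk
  have hγ1 : γ < 1 := lt_trans hγθ hθ1
  have hθ0 : (0:ℝ) < θ := lt_trans h0γ hγθ
  have ha := acrit_mem h0γ hγθ hθ1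
  have ha0 : 0 < acrit γ θ := lt_trans h0γ ha.1
  have hn' : (0:ℝ) < n := by exact_mod_cast hn
  have hna : (0:ℝ) < (n:ℝ) * acrit γ θ := by positivity
  have hceil_pos : (0:ℤ) < ⌈(n:ℝ) * acrit γ θ⌉ := Int.ceil_pos.2 hna
  have hkceil : (k:ℝ) = ((⌈(n:ℝ) * acrit γ θ⌉ : ℤ) : ℝ) := by
    rw [hk]; exact_mod_cast Int.toNat_of_nonneg hceil_pos.le
  have hkge : (n:ℝ) * acrit γ θ ≤ (k:ℝ) := by
    rw [hkceil]; exact Int.le_ceil _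
  have key : ∀ x : Fin n → Bool,
      (if countOnes x = k then berWeight (fun _ : Fin n => γ) x else 0)
      ≤ berWeight (fun _ : Fin n => γ) x * (if φ x then 1 else 0)
        + berWeight (fun _ : Fin n => θ) x * (if φ x then 0 else 1) := by
    intro x
    have hwγ : 0 ≤ berWeight (fun _ : Fin n => γ) x :=
      berWeight_nonneg (fun t => ⟨h0γ.le, hγ1.le⟩) x
    have hwθ : 0 ≤ berWeight (fun _ : Fin n => θ) x :=
      berWeight_nonneg (fun t => ⟨hθ0.le, hθ1.le⟩) x
    by_cases hc : countOnes x = k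
    · rw [if_pos hc]
      have hmono : berWeight (fun _ : Fin n => γ) x ≤ berWeight (fun _ : Fin n => θ) x := by
        apply weight_mono h0γ hγθ hθ1 x
        rw [hc]; exact hkge
      by_cases hφ : φ x = true
      · rw [if_pos hφ, if_pos hφ]
        have he : berWeight (fun _ : Fin n => γ) x * 1 + berWeight (fun _ : Fin n => θ) x * 0
            = berWeight (fun _ : Fin n => γ) x := by ring
        rw [he]
      · rw [if_neg hφ, if_neg hφ]
        have he : berWeight (fun _ : Fin n => γ) x * 0 + berWeight (fun _ : Fin n => θ) x * 1
            = berWeight (fun _ : Fin n => θ) x := by ring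
        rw [he]; exact hmono
    · rw [if_neg hc]
      have h1 : 0 ≤ berWeight (fun _ : Fin n => γ) x * (if φ x = true then (1:ℝ) else 0) :=
        mul_nonneg hwγ (by split_ifs <;> norm_num)
      have h2 : 0 ≤ berWeight (fun _ : Fin n => θ) x * (if φ x = true then (0:ℝ) else 1) :=
        mul_nonneg hwθ (by split_ifs <;> norm_num)
      linarith
  have hsum : ∑ x : Fin n → Bool,
      (if countOnes x = k then berWeight (fun _ : Fin n => γ) x else 0)
      = (n.choose k : ℝ) * γ ^ k * (1 - γ) ^ (n - k) := by
    rw [← Finset.sum_filter]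
    have hcongr : ∀ x ∈ Finset.univ.filter (fun x : Fin n → Bool => countOnes x = k),
        berWeight (fun _ : Fin n => γ) x = γ ^ k * (1 - γ) ^ (n - k) := by
      intro x hx
      rw [Finset.mem_filter] at hx
      rw [berWeight_const, hx.2]
    rw [Finset.sum_congr rfl hcongr, Finset.sum_const, card_countOnes_eq, nsmul_eq_mul]
    ring
  calc (n.choose k : ℝ) * γ ^ k * (1 - γ) ^ (n - k)
      = ∑ x : Fin n → Bool,
          (if countOnes x = k then berWeight (fun _ : Fin n => γ) x else 0) := hsum.symm
  _ ≤ ∑ x : Fin n → Bool,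
        (berWeight (fun _ : Fin n => γ) x * (if φ x then 1 else 0)
          + berWeight (fun _ : Fin n => θ) x * (if φ x then 0 else 1)) :=
      Finset.sum_le_sum (fun x _ => key x)
  _ = rejProb (fun _ : Fin n => γ) φ + accProb (fun _ : Fin n => θ) φ := by
      rw [rejProb, accProb, ← Finset.sum_add_distrib]

lemma bound_rej {γ θ : ℝ} (h0γ : 0 < γ) (hγθ : γ < θ) (hθ1 : θ < 1) (n : ℕ) :
    rejProb (fun _ : Fin n => γ) (ceilTest (acrit γ θ) n)
      ≤ Real.exp (-(klBer (acrit γ θ) γ)) ^ n := by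
  have hθ0 : (0:ℝ) < θ := lt_trans h0γ hγθ
  have hγ1 : γ < 1 := lt_trans hγθ hθ1
  obtain ⟨ha1, ha2⟩ := acrit_mem h0γ hγθ hθ1
  set a := acrit γ θ with hadef
  have ha0 : 0 < a := lt_trans h0γ ha1
  have haa : a < 1 := lt_trans ha2 hθ1
  have h1a : (0:ℝ) < 1 - a := by linarith
  have h1γ : (0:ℝ) < 1 - γ := by linarith
  set lam := Real.log (a * (1-γ) / (γ * (1-a))) with hlam_def
  have hratio : (1:ℝ) ≤ a * (1-γ) / (γ * (1-a)) := by
    rw [le_div_iff₀ (by positivity)]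
    nlinarith
  have hlam : 0 ≤ lam := Real.log_nonneg hratio
  have hexp : Real.exp lam = a * (1-γ) / (γ * (1-a)) :=
    Real.exp_log (by positivity)
  have hM : γ * Real.exp lam + (1 - γ) = (1-γ)/(1-a) := by
    rw [hexp]; field_simp; ring
  have hchern := chernoff_rej (n := n) h0γ.le hγ1.le a lam hlam
  rw [hM] at hchern
  refine le_trans hchern (le_of_eq ?_)
  rw [show -(lam * ((n:ℝ) * a)) = (n:ℝ) * (-(lam * a)) by ring, Real.exp_nat_mul, ← mul_pow]
  congr 1
  rw [← Real.exp_log (show (0:ℝ) < (1-γ)/(1-a) by positivity), ← Real.exp_add]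
  congr 1
  rw [hlam_def, Real.log_div (by positivity) (by positivity),
    Real.log_mul ha0.ne' h1γ.ne', Real.log_mul h0γ.ne' h1a.ne',
    Real.log_div h1γ.ne' h1a.ne', klBer,
    Real.log_div ha0.ne' h0γ.ne', Real.log_div h1a.ne' h1γ.ne']
  ring

lemma bound_acc {γ θ : ℝ} (h0γ : 0 < γ) (hγθ : γ < θ) (hθ1 : θ < 1) {n : ℕ}
    (θs : Fin n → ℝ) (hθs : ∀ t, θs t ∈ Set.Icc θ 1) :
    accProb θs (ceilTest (acrit γ θ) n)
      ≤ Real.exp (-(klBer (acrit γ θ) γ)) ^ n := by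
  have hθ0 : (0:ℝ) < θ := lt_trans h0γ hγθ
  have hγ1 : γ < 1 := lt_trans hγθ hθ1
  obtain ⟨ha1, ha2⟩ := acrit_mem h0γ hγθ hθ1
  set a := acrit γ θ with hadef
  have ha0 : 0 < a := lt_trans h0γ ha1
  have haa : a < 1 := lt_trans ha2 hθ1
  have h1a : (0:ℝ) < 1 - a := by linarith
  have h1θ : (0:ℝ) < 1 - θ := by linarith
  set lam := Real.log (θ * (1-a) / (a * (1-θ))) with hlam_def
  have hratio : (1:ℝ) ≤ θ * (1-a) / (a * (1-θ)) := by
    rw [le_div_iff₀ (by positivity)]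
    nlinarith
  have hlam : 0 ≤ lam := Real.log_nonneg hratio
  have hexp : Real.exp (-lam) = a * (1-θ) / (θ * (1-a)) := by
    rw [Real.exp_neg, hlam_def, Real.exp_log (by positivity)]
    rw [inv_div]
  have hexple : Real.exp (-lam) ≤ 1 := by
    rw [← Real.exp_zero]; exact Real.exp_le_exp.2 (by linarith)
  have hfact : ∀ t, θs t * Real.exp (-lam) + (1 - θs t) ≤ θ * Real.exp (-lam) + (1 - θ) := by
    intro t
    obtain ⟨h1, h2⟩ := hθs t
    nlinarith [Real.exp_pos (-lam)]
  have hfact0 : ∀ t, 0 ≤ θs t * Real.exp (-lam) + (1 - θs t) := by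
    intro t
    obtain ⟨h1, h2⟩ := hθs t
    have : 0 ≤ θs t := le_trans hθ0.le h1
    nlinarith [Real.exp_pos (-lam)]
  have hM : θ * Real.exp (-lam) + (1 - θ) = (1-θ)/(1-a) := by
    rw [hexp]; field_simp; ring
  have hchern := chernoff_acc (n := n) θs
    (fun t => ⟨le_trans hθ0.le (hθs t).1, (hθs t).2⟩) a lam hlam
  have hprod : ∏ t, (θs t * Real.exp (-lam) + (1 - θs t)) ≤ ((1-θ)/(1-a)) ^ n := by
    calc ∏ t, (θs t * Real.exp (-lam) + (1 - θs t))
        ≤ ∏ _t : Fin n, (θ * Real.exp (-lam) + (1 - θ)) :=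
          Finset.prod_le_prod (fun t _ => hfact0 t) (fun t _ => hfact t)
    _ = ((1-θ)/(1-a)) ^ n := by rw [Finset.prod_const, hM]; simp
  have hbound : accProb θs (ceilTest a n)
      ≤ Real.exp (lam * ((n:ℝ) * a)) * ((1-θ)/(1-a)) ^ n := by
    refine le_trans hchern ?_
    exact mul_le_mul_of_nonneg_left hprod (Real.exp_pos _).le
  refine le_trans hbound (le_of_eq ?_)
  rw [show lam * ((n:ℝ) * a) = (n:ℝ) * (lam * a) by ring, Real.exp_nat_mul, ← mul_pow]
  congr 1
  rw [klBer_acrit_eq h0γ hγθ hθ1, ← hadef]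
  rw [← Real.exp_log (show (0:ℝ) < (1-θ)/(1-a) by positivity), ← Real.exp_add]
  congr 1
  rw [hlam_def, Real.log_div (by positivity) (by positivity),
    Real.log_mul hθ0.ne' h1a.ne', Real.log_mul ha0.ne' h1θ.ne',
    Real.log_div h1θ.ne' h1a.ne', klBer,
    Real.log_div ha0.ne' hθ0.ne', Real.log_div h1a.ne' h1θ.ne']
  ring


lemma rejProb_nonneg {n : ℕ} {θs : Fin n → ℝ} (h : ∀ t, 0 ≤ θs t ∧ θs t ≤ 1)
    (φ : (Fin n → Bool) → Bool) : 0 ≤ rejProb θs φ :=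
  Finset.sum_nonneg fun x _ =>
    mul_nonneg (berWeight_nonneg h x) (by split_ifs <;> norm_num)

lemma accProb_nonneg {n : ℕ} {θs : Fin n → ℝ} (h : ∀ t, 0 ≤ θs t ∧ θs t ≤ 1)
    (φ : (Fin n → Bool) → Bool) : 0 ≤ accProb θs φ :=
  Finset.sum_nonneg fun x _ =>
    mul_nonneg (berWeight_nonneg h x) (by split_ifs <;> norm_num)

lemma rejProb_le_one {n : ℕ} {θs : Fin n → ℝ} (h : ∀ t, 0 ≤ θs t ∧ θs t ≤ 1)
    (φ : (Fin n → Bool) → Bool) : rejProb θs φ ≤ 1 := by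
  calc rejProb θs φ ≤ ∑ x : Fin n → Bool, berWeight θs x :=
      Finset.sum_le_sum fun x _ => by
        by_cases hx : φ x = true
        · rw [if_pos hx, mul_one]
        · rw [if_neg hx, mul_zero]; exact berWeight_nonneg h x
  _ = 1 := sum_berWeight θs

lemma accProb_le_one {n : ℕ} {θs : Fin n → ℝ} (h : ∀ t, 0 ≤ θs t ∧ θs t ≤ 1)
    (φ : (Fin n → Bool) → Bool) : accProb θs φ ≤ 1 := by
  calc accProb θs φ ≤ ∑ x : Fin n → Bool, berWeight θs x :=
      Finset.sum_le_sum fun x _ => by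
        by_cases hx : φ x = true
        · rw [if_pos hx, mul_zero]; exact berWeight_nonneg h x
        · rw [if_neg hx, mul_one]
  _ = 1 := sum_berWeight θs

lemma choose_lower {γ : ℝ} (h0 : 0 < γ) (h1 : γ < 1) {n k : ℕ} (hk0 : 0 < k) (hkn : k < n) :
    ((n:ℝ)+1)⁻¹ * Real.exp (-((n:ℝ) * klBer ((k:ℝ)/n) γ))
      ≤ (n.choose k : ℝ) * γ ^ k * (1-γ) ^ (n-k) := by
  have hn : 0 < n := lt_trans hk0 hkn
  have hn' : (0:ℝ) < n := by exact_mod_cast hn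
  have h1γ : (0:ℝ) < 1 - γ := by linarith
  set s : ℝ := (k:ℝ)/n with hs
  have hs0 : 0 < s := by
    rw [hs]; positivity
  have hs1 : s < 1 := by
    rw [hs, div_lt_one hn']; exact_mod_cast hkn
  have h1s : (0:ℝ) < 1 - s := by linarith
  have hns : (n:ℝ) * s = k := by rw [hs]; field_simp
  have hnk : ((n - k : ℕ) : ℝ) = (n:ℝ) - k := by rw [Nat.cast_sub hkn.le]
  have hexp : -((n:ℝ) * klBer s γ)
      = (k:ℝ) * Real.log (γ / s) + ((n - k : ℕ):ℝ) * Real.log ((1-γ)/(1-s)) := by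
    rw [klBer, hnk, Real.log_div h0.ne' hs0.ne', Real.log_div h1γ.ne' h1s.ne',
      Real.log_div hs0.ne' h0.ne', Real.log_div h1s.ne' h1γ.ne']
    linear_combination (Real.log γ - Real.log s + Real.log (1-s) - Real.log (1-γ)) * hns
  have hident : γ ^ k * (1-γ) ^ (n-k)
      = s ^ k * (1-s) ^ (n-k) * Real.exp (-((n:ℝ) * klBer s γ)) := by
    rw [hexp, Real.exp_add, Real.exp_nat_mul, Real.exp_nat_mul,
      Real.exp_log (by positivity : (0:ℝ) < γ / s),
      Real.exp_log (by positivity : (0:ℝ) < (1-γ)/(1-s))]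
    calc γ ^ k * (1-γ) ^ (n-k)
        = (s * (γ/s)) ^ k * ((1-s) * ((1-γ)/(1-s))) ^ (n-k) := by
          rw [mul_comm s (γ/s), div_mul_cancel₀ _ hs0.ne',
            mul_comm (1-s) ((1-γ)/(1-s)), div_mul_cancel₀ _ h1s.ne']
    _ = s ^ k * (1-s) ^ (n-k) * ((γ/s) ^ k * ((1-γ)/(1-s)) ^ (n-k)) := by
          rw [mul_pow, mul_pow]; ring
  have hmode := one_le_succ_mul_mode hn hkn.le
  rw [← hs] at hmode
  have hEpos : (0:ℝ) < Real.exp (-((n:ℝ) * klBer s γ)) := Real.exp_pos _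
  have h2 : ((n:ℝ)+1)⁻¹ ≤ binTerm n s k := by
    rw [inv_le_iff_one_le_mul₀ (by positivity)]
    linarith [hmode]
  calc ((n:ℝ)+1)⁻¹ * Real.exp (-((n:ℝ) * klBer s γ))
      ≤ binTerm n s k * Real.exp (-((n:ℝ) * klBer s γ)) :=
        mul_le_mul_of_nonneg_right h2 hEpos.le
  _ = (n.choose k : ℝ) * (s ^ k * (1-s) ^ (n-k) * Real.exp (-((n:ℝ) * klBer s γ))) := by
        rw [binTerm]; ring
  _ = (n.choose k : ℝ) * (γ ^ k * (1-γ) ^ (n-k)) := by rw [← hident]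
  _ = (n.choose k : ℝ) * γ ^ k * (1-γ) ^ (n-k) := by ring

lemma tendsto_log_succ_div : Tendsto (fun n : ℕ => Real.log ((n:ℝ)+1) / n) atTop (nhds 0) := by
  have h0 : Tendsto (fun x : ℝ => Real.log x ^ 1 / (1 * x + (-1))) atTop (nhds 0) :=
    Real.tendsto_pow_log_div_mul_add_atTop 1 (-1) 1 one_ne_zero
  have h1 : Tendsto (fun n : ℕ => (n:ℝ) + 1) atTop atTop :=
    tendsto_atTop_add_const_right _ 1 tendsto_natCast_atTop_atTop
  have h2 := h0.comp h1
  apply h2.congr'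
  filter_upwards [eventually_ge_atTop 1] with n hn
  have he : (1:ℝ) * ((n:ℝ)+1) + (-1) = n := by ring
  simp only [Function.comp_apply, pow_one, he]

lemma tendsto_inv_rpow_inv :
    Tendsto (fun n : ℕ => (((n:ℝ)+1))⁻¹ ^ ((n:ℝ)⁻¹)) atTop (nhds 1) := by
  have key : ∀ n : ℕ, (((n:ℝ)+1))⁻¹ ^ ((n:ℝ)⁻¹)
      = Real.exp (-(Real.log ((n:ℝ)+1) / n)) := by
    intro n
    rw [Real.rpow_def_of_pos (by positivity), Real.log_inv]
    congr 1
    ring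
  simp_rw [key]
  have hneg : Tendsto (fun n : ℕ => -(Real.log ((n:ℝ)+1) / n)) atTop (nhds 0) := by
    have := tendsto_log_succ_div.neg
    simpa using this
  have := (Real.continuous_exp.tendsto 0).comp hneg
  simpa [Function.comp_def] using this

lemma tendsto_two_rpow_inv :
    Tendsto (fun n : ℕ => (2:ℝ) ^ ((n:ℝ)⁻¹)) atTop (nhds 1) := by
  have key : ∀ n : ℕ, (2:ℝ) ^ ((n:ℝ)⁻¹) = Real.exp (Real.log 2 * ((n:ℝ)⁻¹)) := by
    intro n
    rw [Real.rpow_def_of_pos (by norm_num)]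
  simp_rw [key]
  have hinv : Tendsto (fun n : ℕ => ((n:ℝ))⁻¹) atTop (nhds 0) :=
    tendsto_natCast_atTop_atTop.inv_tendsto_atTop
  have hmul : Tendsto (fun n : ℕ => Real.log 2 * ((n:ℝ))⁻¹) atTop (nhds 0) := by
    have := hinv.const_mul (Real.log 2)
    simpa using this
  have := (Real.continuous_exp.tendsto 0).comp hmul
  simpa [Function.comp_def] using this

lemma tendsto_UB {E : ℝ} (hE : 0 < E) :
    Tendsto (fun n : ℕ => ((2:ℝ) * E ^ n) ^ ((n:ℝ)⁻¹)) atTop (nhds E) := by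
  have key : ∀ᶠ n : ℕ in atTop, ((2:ℝ) * E ^ n) ^ ((n:ℝ)⁻¹)
      = (2:ℝ) ^ ((n:ℝ)⁻¹) * E := by
    filter_upwards [eventually_ge_atTop 1] with n hn
    have hn' : (0:ℝ) < n := by exact_mod_cast hn
    rw [Real.mul_rpow (by norm_num) (by positivity)]
    congr 1
    rw [← Real.rpow_natCast E n, ← Real.rpow_mul hE.le, mul_inv_cancel₀ hn'.ne', Real.rpow_one]
  have hlim : Tendsto (fun n : ℕ => (2:ℝ) ^ ((n:ℝ)⁻¹) * E) atTop (nhds E) := by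
    have := tendsto_two_rpow_inv.mul_const E
    simpa using this
  exact hlim.congr' (EventuallyEq.symm key)


lemma tendsto_sn {a : ℝ} (ha0 : 0 < a) (ha1 : a < 1) :
    Tendsto (fun n : ℕ => ((⌈(n:ℝ)*a⌉.toNat : ℕ) : ℝ) / n) atTop (nhds a) := by
  have hup : Tendsto (fun n : ℕ => a + 1/(n:ℝ)) atTop (nhds a) := by
    have hinv : Tendsto (fun n : ℕ => 1/(n:ℝ)) atTop (nhds 0) := by
      simpa [one_div, Pi.inv_def] using (tendsto_natCast_atTop_atTop (R := ℝ)).inv_tendsto_atTop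
    have := hinv.const_add a
    simpa using this
  apply tendsto_of_tendsto_of_tendsto_of_le_of_le' (tendsto_const_nhds) hup
  · filter_upwards [eventually_ge_atTop 1] with n hn
    have hn' : (0:ℝ) < n := by exact_mod_cast hn
    have hna : (0:ℝ) ≤ (n:ℝ)*a := by positivity
    have h1 : ((⌈(n:ℝ)*a⌉.toNat : ℕ) : ℝ) = ((⌈(n:ℝ)*a⌉ : ℤ) : ℝ) := by
      exact_mod_cast Int.toNat_of_nonneg (Int.ceil_nonneg hna)
    rw [le_div_iff₀ hn', h1]
    calc a * n = (n:ℝ) * a := by ring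
    _ ≤ _ := Int.le_ceil _
  · filter_upwards [eventually_ge_atTop 1] with n hn
    have hn' : (0:ℝ) < n := by exact_mod_cast hn
    have hna : (0:ℝ) ≤ (n:ℝ)*a := by positivity
    have h1 : ((⌈(n:ℝ)*a⌉.toNat : ℕ) : ℝ) = ((⌈(n:ℝ)*a⌉ : ℤ) : ℝ) := by
      exact_mod_cast Int.toNat_of_nonneg (Int.ceil_nonneg hna)
    rw [div_le_iff₀ hn', h1]
    have h2 : ((⌈(n:ℝ)*a⌉ : ℤ) : ℝ) < (n:ℝ)*a + 1 := Int.ceil_lt_add_one _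
    calc ((⌈(n:ℝ)*a⌉ : ℤ) : ℝ) ≤ (n:ℝ)*a + 1 := h2.le
    _ = (a + 1/n) * n := by field_simp

lemma continuousAt_klBer {γ a : ℝ} (h0 : 0 < γ) (h1 : γ < 1) (ha0 : 0 < a) (ha1 : a < 1) :
    ContinuousAt (fun x : ℝ => klBer x γ) a := by
  have h1a : (0:ℝ) < 1 - a := by linarith
  have h1γ : (0:ℝ) < 1 - γ := by linarith
  have c1 : ContinuousAt (fun x : ℝ => x * Real.log (x / γ)) a := by
    apply ContinuousAt.mul continuousAt_id
    exact ContinuousAt.log (continuousAt_id.div_const γ)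
      (by positivity : (0:ℝ) < a / γ).ne'
  have c2 : ContinuousAt (fun x : ℝ => (1 - x) * Real.log ((1 - x) / (1 - γ))) a := by
    apply ContinuousAt.mul (continuousAt_const.sub continuousAt_id)
    exact ContinuousAt.log ((continuousAt_const.sub continuousAt_id).div_const (1 - γ))
      (by positivity : (0:ℝ) < (1-a) / (1-γ)).ne'
  exact c1.add c2

lemma tendsto_LB {γ a : ℝ} (h0 : 0 < γ) (h1 : γ < 1) (ha0 : 0 < a) (ha1 : a < 1) :
    Tendsto (fun n : ℕ => ((((n:ℝ)+1))⁻¹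
        * Real.exp (-((n:ℝ) * klBer ((⌈(n:ℝ)*a⌉.toNat : ℝ)/n) γ))) ^ ((n:ℝ)⁻¹))
      atTop (nhds (Real.exp (-(klBer a γ)))) := by
  have hsn := tendsto_sn ha0 ha1
  have hcont := continuousAt_klBer h0 h1 ha0 ha1
  have hdn : Tendsto (fun n : ℕ => klBer ((⌈(n:ℝ)*a⌉.toNat : ℝ)/n) γ) atTop
      (nhds (klBer a γ)) := (hcont.tendsto).comp hsn
  have hnegdn : Tendsto (fun n : ℕ => -(klBer ((⌈(n:ℝ)*a⌉.toNat : ℝ)/n) γ)) atTop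
      (nhds (-(klBer a γ))) := hdn.neg
  have hexp : Tendsto (fun n : ℕ => Real.exp (-(klBer ((⌈(n:ℝ)*a⌉.toNat : ℝ)/n) γ))) atTop
      (nhds (Real.exp (-(klBer a γ)))) := (Real.continuous_exp.tendsto _).comp hnegdn
  have hlim : Tendsto (fun n : ℕ => (((n:ℝ)+1))⁻¹ ^ ((n:ℝ)⁻¹)
      * Real.exp (-(klBer ((⌈(n:ℝ)*a⌉.toNat : ℝ)/n) γ))) atTop
      (nhds (Real.exp (-(klBer a γ)))) := by
    have := tendsto_inv_rpow_inv.mul hexp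
    simpa using this
  apply hlim.congr'
  filter_upwards [eventually_ge_atTop 1] with n hn
  have hn' : (0:ℝ) < n := by exact_mod_cast hn
  rw [Real.mul_rpow (by positivity) (Real.exp_pos _).le]
  congr 1
  rw [Real.rpow_def_of_pos (Real.exp_pos _), Real.log_exp]
  congr 1
  field_simp

/-- For `0 < γ < θ < 1` and `a = acrit γ θ`: `a ∈ (γ, θ)`,
`d(a‖γ) = d(a‖θ)`, the test rejecting iff `∑ X_t ≥ ⌈na⌉` has worst-case sum of type I and
type II errors decaying at exponential rate exactly `e^{−d(a‖γ)}` (the supremum being over all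
independent `Bernoulli(θ_t)` alternatives with `θ_t ∈ [θ,1]`), and no sequence of tests can
beat this rate; hence the threshold test asymptotically minimizes the sum of the two errors. -/
theorem stmt_10
    (γ θ : ℝ) (h0γ : 0 < γ) (hγθ : γ < θ) (hθ1 : θ < 1) :
    acrit γ θ ∈ Set.Ioo γ θ
    ∧ klBer (acrit γ θ) γ = klBer (acrit γ θ) θ
    ∧ Filter.limsup (fun n : ℕ =>
        (rejProb (fun _ : Fin n => γ) (ceilTest (acrit γ θ) n)
          + sSup {e : ℝ | ∃ θs : Fin n → ℝ, (∀ t, θs t ∈ Set.Icc θ 1)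
              ∧ e = accProb θs (ceilTest (acrit γ θ) n)}) ^ ((n : ℝ)⁻¹)) atTop
        = Real.exp (-(klBer (acrit γ θ) γ))
    ∧ ∀ φ : (n : ℕ) → (Fin n → Bool) → Bool,
        Real.exp (-(klBer (acrit γ θ) γ))
          ≤ Filter.limsup (fun n : ℕ =>
              (rejProb (fun _ : Fin n => γ) (φ n)
                + accProb (fun _ : Fin n => θ) (φ n)) ^ ((n : ℝ)⁻¹)) atTop := by
  have hθ0 : (0:ℝ) < θ := lt_trans h0γ hγθ
  have hγ1 : γ < 1 := lt_trans hγθ hθ1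
  obtain ⟨ha1, ha2⟩ := acrit_mem h0γ hγθ hθ1
  have hkl := klBer_acrit_eq h0γ hγθ hθ1
  have ha0 : 0 < acrit γ θ := lt_trans h0γ ha1
  have haa : acrit γ θ < 1 := lt_trans ha2 hθ1
  have h1a : (0:ℝ) < 1 - acrit γ θ := by linarith
  have hE0 : (0:ℝ) < Real.exp (-(klBer (acrit γ θ) γ)) := Real.exp_pos _
  -- eventual goodness of the ceiling index
  have hgood : ∀ᶠ n : ℕ in atTop,
      1 ≤ n ∧ 0 < (⌈(n:ℝ) * acrit γ θ⌉).toNat ∧ (⌈(n:ℝ) * acrit γ θ⌉).toNat < n := by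
    have hT : Tendsto (fun n : ℕ => (n:ℝ) * (1 - acrit γ θ)) atTop atTop :=
      Tendsto.atTop_mul_const h1a tendsto_natCast_atTop_atTop
    filter_upwards [eventually_ge_atTop 1, hT.eventually_gt_atTop 1] with n hn1 hn2
    have hn' : (0:ℝ) < n := by exact_mod_cast hn1
    have hna : (0:ℝ) < (n:ℝ) * acrit γ θ := by positivity
    have hcp : (0:ℤ) < ⌈(n:ℝ) * acrit γ θ⌉ := Int.ceil_pos.2 hna
    have h4 : ((⌈(n:ℝ) * acrit γ θ⌉.toNat : ℕ) : ℤ) = ⌈(n:ℝ) * acrit γ θ⌉ :=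
      Int.toNat_of_nonneg hcp.le
    refine ⟨hn1, by omega, ?_⟩
    have hceil : ((⌈(n:ℝ) * acrit γ θ⌉ : ℤ) : ℝ) < (n:ℝ) * acrit γ θ + 1 :=
      Int.ceil_lt_add_one _
    have hlt : (n:ℝ) * acrit γ θ + 1 < n := by nlinarith
    have h2 : ((⌈(n:ℝ) * acrit γ θ⌉ : ℤ) : ℝ) < (n:ℝ) := by linarith
    have h3 : (⌈(n:ℝ) * acrit γ θ⌉ : ℤ) < (n : ℤ) := by exact_mod_cast h2
    omega
  -- per-n lower bound via an arbitrary test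
  have hLB : ∀ (n : ℕ), 1 ≤ n → 0 < (⌈(n:ℝ) * acrit γ θ⌉).toNat →
      (⌈(n:ℝ) * acrit γ θ⌉).toNat < n → ∀ φ : (Fin n → Bool) → Bool,
      (((n:ℝ)+1))⁻¹ * Real.exp (-((n:ℝ) * klBer ((⌈(n:ℝ)*acrit γ θ⌉.toNat : ℝ)/n) γ))
        ≤ rejProb (fun _ : Fin n => γ) φ + accProb (fun _ : Fin n => θ) φ := by
    intro n hn1 hk0 hkn φ
    exact le_trans (choose_lower h0γ hγ1 hk0 hkn) (test_lower h0γ hγθ hθ1 (by omega) φ)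
  refine ⟨⟨ha1, ha2⟩, hkl, ?_, ?_⟩
  · -- limsup equality for the threshold test
    apply Filter.Tendsto.limsup_eq
    apply tendsto_of_tendsto_of_tendsto_of_le_of_le' (tendsto_LB h0γ hγ1 ha0 haa)
      (tendsto_UB hE0)
    · -- lower bound
      filter_upwards [hgood] with n hn
      obtain ⟨hn1, hk0, hkn⟩ := hn
      apply Real.rpow_le_rpow (by positivity) ?_ (by positivity)
      have hone := hLB n hn1 hk0 hkn (ceilTest (acrit γ θ) n)
      have hmemS : accProb (fun _ : Fin n => θ) (ceilTest (acrit γ θ) n) ∈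
          {e : ℝ | ∃ θs : Fin n → ℝ, (∀ t, θs t ∈ Set.Icc θ 1)
            ∧ e = accProb θs (ceilTest (acrit γ θ) n)} :=
        ⟨fun _ => θ, fun t => ⟨le_refl θ, hθ1.le⟩, rfl⟩
      have hbdd : BddAbove {e : ℝ | ∃ θs : Fin n → ℝ, (∀ t, θs t ∈ Set.Icc θ 1)
          ∧ e = accProb θs (ceilTest (acrit γ θ) n)} := by
        refine ⟨1, fun e he => ?_⟩
        obtain ⟨θs, hθs, rfl⟩ := he
        exact accProb_le_one (fun t => ⟨le_trans hθ0.le (hθs t).1, (hθs t).2⟩) _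
      have hsup := le_csSup hbdd hmemS
      linarith
    · -- upper bound
      apply Filter.Eventually.of_forall
      intro n
      have hrej := bound_rej h0γ hγθ hθ1 n
      have hsup_le : sSup {e : ℝ | ∃ θs : Fin n → ℝ, (∀ t, θs t ∈ Set.Icc θ 1)
          ∧ e = accProb θs (ceilTest (acrit γ θ) n)}
          ≤ Real.exp (-(klBer (acrit γ θ) γ)) ^ n := by
        apply Real.sSup_le
        · intro e he
          obtain ⟨θs, hθs, rfl⟩ := he
          exact bound_acc h0γ hγθ hθ1 θs hθs
        · positivity
      have hsup_ge : (0:ℝ) ≤ sSup {e : ℝ | ∃ θs : Fin n → ℝ, (∀ t, θs t ∈ Set.Icc θ 1)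
          ∧ e = accProb θs (ceilTest (acrit γ θ) n)} := by
        have hmemS : accProb (fun _ : Fin n => θ) (ceilTest (acrit γ θ) n) ∈
            {e : ℝ | ∃ θs : Fin n → ℝ, (∀ t, θs t ∈ Set.Icc θ 1)
              ∧ e = accProb θs (ceilTest (acrit γ θ) n)} :=
          ⟨fun _ => θ, fun t => ⟨le_refl θ, hθ1.le⟩, rfl⟩
        have hbdd : BddAbove {e : ℝ | ∃ θs : Fin n → ℝ, (∀ t, θs t ∈ Set.Icc θ 1)
            ∧ e = accProb θs (ceilTest (acrit γ θ) n)} := by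
          refine ⟨1, fun e he => ?_⟩
          obtain ⟨θs, hθs, rfl⟩ := he
          exact accProb_le_one (fun t => ⟨le_trans hθ0.le (hθs t).1, (hθs t).2⟩) _
        refine le_trans ?_ (le_csSup hbdd hmemS)
        exact accProb_nonneg (fun t => ⟨hθ0.le, hθ1.le⟩) _
      apply Real.rpow_le_rpow ?_ ?_ (by positivity)
      · have := rejProb_nonneg (θs := fun _ : Fin n => γ)
          (fun t => ⟨h0γ.le, hγ1.le⟩) (ceilTest (acrit γ θ) n)
        linarith
      · linarith
  · -- no test beats the rate
    intro φ
    have hLBlim := tendsto_LB h0γ hγ1 ha0 haa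
    rw [← hLBlim.limsup_eq]
    apply Filter.limsup_le_limsup
    · filter_upwards [hgood] with n hn
      obtain ⟨hn1, hk0, hkn⟩ := hn
      apply Real.rpow_le_rpow (by positivity) ?_ (by positivity)
      exact hLB n hn1 hk0 hkn (φ n)
    · exact hLBlim.isBoundedUnder_ge.isCoboundedUnder_le
    · apply Filter.isBoundedUnder_of
      refine ⟨2, fun n => ?_⟩
      have h0r : (0:ℝ) ≤ rejProb (fun _ : Fin n => γ) (φ n) :=
        rejProb_nonneg (fun t => ⟨h0γ.le, hγ1.le⟩) _
      have h0a : (0:ℝ) ≤ accProb (fun _ : Fin n => θ) (φ n) :=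
        accProb_nonneg (fun t => ⟨hθ0.le, hθ1.le⟩) _
      have h1r : rejProb (fun _ : Fin n => γ) (φ n) ≤ 1 :=
        rejProb_le_one (fun t => ⟨h0γ.le, hγ1.le⟩) _
      have h1r' : accProb (fun _ : Fin n => θ) (φ n) ≤ 1 :=
        accProb_le_one (fun t => ⟨hθ0.le, hθ1.le⟩) _
      rcases Nat.eq_zero_or_pos n with hn | hn
      · subst hn
        norm_num
      · have hn' : (1:ℝ) ≤ n := by exact_mod_cast hn
        calc (rejProb (fun _ : Fin n => γ) (φ n)
              + accProb (fun _ : Fin n => θ) (φ n)) ^ ((n:ℝ)⁻¹)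
            ≤ (2:ℝ) ^ ((n:ℝ)⁻¹) :=
              Real.rpow_le_rpow (by linarith) (by linarith) (by positivity)
        _ ≤ (2:ℝ) ^ (1:ℝ) :=
              Real.rpow_le_rpow_of_exponent_le (by norm_num)
                (by rw [inv_le_one_iff₀]; right; exact hn')
        _ = 2 := Real.rpow_one 2
end

section
/- Define R = − inf_{λ ≥ 0} [ λ m_0 + sup_{β ∈ B} log ∫ e^{−λ h} dν_β ] ∈ [−∞, +∞]. Let (γ_n) be a sequence of real numbers with γ_n / n → m_0 as n → ∞ (for instance, γ_n chosen so that the test rejecting when ∑_{t=1}^n h(Y_t) ≥ γ_n has type I error exactly α ∈ (0,1) under i.i.d. sampling from μ_0). Then limsup_{n→∞} [ sup_{β_1, …, β_n ∈ B} ℙ( ∑_{t=1}^n h(Y_t) < γ_n ) ]^{1/n} ≤ e^{−R}, where inside the probability Y_1, …, Y_n are independent with Y_t ∼ ν_{β_t}. -/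
open MeasureTheory ProbabilityTheory Filter Set ENNReal

private lemma lintegral_pi_prod_aux {E : Type*} [MeasurableSpace E] :
    ∀ {n : ℕ} (μ : Fin n → Measure E), (∀ i, IsProbabilityMeasure (μ i)) →
      ∀ (g : Fin n → E → ℝ≥0∞), (∀ i, Measurable (g i)) →
      ∫⁻ y, ∏ i, g i (y i) ∂Measure.pi μ = ∏ i, ∫⁻ x, g i x ∂(μ i) := by
  intro n
  induction n with
  | zero =>
    intro μ hμ g hg
    haveI : ∀ i, IsProbabilityMeasure (μ i) := hμ
    simp
  | succ n ih =>
    intro μ hμ g hg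
    haveI : ∀ i, IsProbabilityMeasure (μ i) := hμ
    set e := MeasurableEquiv.piFinSuccAbove (fun _ : Fin (n+1) => E) 0 with he
    have hF : Measurable (fun z : E × (Fin n → E) => g 0 z.1 * ∏ i, g i.succ (z.2 i)) := by
      apply ((hg 0).comp measurable_fst).mul
      exact Finset.measurable_prod _ fun i _ =>
        (hg i.succ).comp ((measurable_pi_apply i).comp measurable_snd)
    have hmp := MeasureTheory.measurePreserving_piFinSuccAbove μ 0
    have key := hmp.lintegral_comp (f := fun z => g 0 z.1 * ∏ i, g i.succ (z.2 i)) hF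
    have lhs_eq : ∫⁻ y, ∏ i, g i (y i) ∂Measure.pi μ
        = ∫⁻ y, g 0 ((e y).1) * ∏ i, g i.succ ((e y).2 i) ∂Measure.pi μ := by
      apply lintegral_congr
      intro y
      have h1 : (e y).1 = y 0 := rfl
      have h2 : ∀ i : Fin n, (e y).2 i = y i.succ := fun i => rfl
      rw [h1]
      simp only [h2]
      rw [Fin.prod_univ_succ]
    have prodmul :
        ∫⁻ z : E × (Fin n → E), g 0 z.1 * (fun w : Fin n → E => ∏ i, g i.succ (w i)) z.2
            ∂(μ 0).prod (Measure.pi fun j => μ (Fin.succAbove 0 j))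
          = (∫⁻ x, g 0 x ∂μ 0) *
            ∫⁻ w : Fin n → E, ∏ i, g i.succ (w i)
              ∂Measure.pi (fun j => μ (Fin.succAbove 0 j)) :=
      lintegral_prod_mul (hg 0).aemeasurable
        ((Finset.measurable_prod _ fun (i : Fin n) _ =>
          (hg i.succ).comp (measurable_pi_apply i)).aemeasurable)
    rw [lhs_eq, key]
    rw [show (∫⁻ b : E × (Fin n → E),
        (fun z : E × (Fin n → E) => g 0 z.1 * ∏ i, g i.succ (z.2 i)) b
          ∂(μ 0).prod (Measure.pi fun j => μ (Fin.succAbove 0 j)))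
      = (∫⁻ x, g 0 x ∂μ 0) *
        ∫⁻ w : Fin n → E, ∏ i, g i.succ (w i)
          ∂Measure.pi (fun j => μ (Fin.succAbove 0 j)) from prodmul]
    have tail : ∫⁻ w : Fin n → E, ∏ i, g i.succ (w i) ∂Measure.pi (fun i => μ (Fin.succAbove 0 i))
        = ∏ i : Fin n, ∫⁻ x, g i.succ x ∂μ i.succ := by
      have := ih (fun i => μ i.succ) (fun i => hμ i.succ) (fun i => g i.succ)
        (fun i => hg i.succ)
      simpa using this
    rw [tail, Fin.prod_univ_succ]

private lemma chernoff_bound {E : Type*} [MeasurableSpace E]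
    (h : E → ℝ) (hmeas : Measurable h) {B : Type*}
    (ν : B → Measure E) [∀ β, IsProbabilityMeasure (ν β)]
    (l : ℝ) (hl : 0 ≤ l) (c : ℝ) {n : ℕ} (βs : Fin n → B) :
    Measure.pi (fun t => ν (βs t)) {y | ∑ t, h (y t) < c}
      ≤ ENNReal.ofReal (Real.exp (l * c)) *
        (⨆ β, ∫⁻ x, ENNReal.ofReal (Real.exp (-l * h x)) ∂ν β) ^ n := by
  set g : E → ℝ≥0∞ := fun x => ENNReal.ofReal (Real.exp (-l * h x)) with hG
  have hgm : Measurable g := ENNReal.measurable_ofReal.comp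
    (Real.measurable_exp.comp (measurable_const.mul hmeas))
  have hsum : Measurable (fun y : Fin n → E => ∑ t, h (y t)) :=
    Finset.measurable_sum _ fun t _ => hmeas.comp (measurable_pi_apply t)
  have hset : MeasurableSet {y : Fin n → E | ∑ t, h (y t) < c} :=
    measurableSet_lt hsum measurable_const
  set f : (Fin n → E) → ℝ≥0∞ :=
    fun y => ENNReal.ofReal (Real.exp (l * c)) * ∏ t, g (y t) with hFdef
  have hpoint : ∀ y : Fin n → E,
      ({y : Fin n → E | ∑ t, h (y t) < c}).indicator (fun _ => (1 : ℝ≥0∞)) y ≤ f y := by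
    intro y
    by_cases hy : y ∈ {y : Fin n → E | ∑ t, h (y t) < c}
    · rw [Set.indicator_of_mem hy]
      have hfy : f y = ENNReal.ofReal (Real.exp (l * c + ∑ t, (-l * h (y t)))) := by
        rw [hFdef]
        simp only [hG]
        rw [← ENNReal.ofReal_prod_of_nonneg (fun t _ => (Real.exp_pos _).le),
          ← Real.exp_sum, ← ENNReal.ofReal_mul (Real.exp_pos _).le, ← Real.exp_add]
      rw [hfy]
      rw [ENNReal.one_le_ofReal]
      apply Real.one_le_exp
      have : l * c + ∑ t, -l * h (y t) = l * (c - ∑ t, h (y t)) := by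
        rw [← Finset.mul_sum]
        ring
      rw [this]
      exact mul_nonneg hl (sub_nonneg.2 hy.le)
    · rw [Set.indicator_of_notMem hy]; exact zero_le
  calc Measure.pi (fun t => ν (βs t)) {y | ∑ t, h (y t) < c}
      = ∫⁻ y, ({y : Fin n → E | ∑ t, h (y t) < c}).indicator (fun _ => (1:ℝ≥0∞)) y
          ∂Measure.pi (fun t => ν (βs t)) := (lintegral_indicator_one hset).symm
    _ ≤ ∫⁻ y, f y ∂Measure.pi (fun t => ν (βs t)) := lintegral_mono hpoint
    _ = ENNReal.ofReal (Real.exp (l * c)) *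
          ∫⁻ y, ∏ t, g (y t) ∂Measure.pi (fun t => ν (βs t)) := by
        rw [hFdef]
        exact lintegral_const_mul _ (Finset.measurable_prod _ fun t _ =>
          hgm.comp (measurable_pi_apply t))
    _ = ENNReal.ofReal (Real.exp (l * c)) * ∏ t, ∫⁻ x, g x ∂ν (βs t) := by
        rw [lintegral_pi_prod_aux (fun t => ν (βs t)) (fun t => inferInstance)
          (fun _ => g) (fun _ => hgm)]
    _ ≤ ENNReal.ofReal (Real.exp (l * c)) * (⨆ β, ∫⁻ x, g x ∂ν β) ^ n := by
        gcongr with t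
        calc ∏ t : Fin n, ∫⁻ x, g x ∂ν (βs t)
            ≤ ∏ _t : Fin n, ⨆ β, ∫⁻ x, g x ∂ν β :=
              Finset.prod_le_prod' fun t _ => le_iSup (fun β => ∫⁻ x, g x ∂ν β) (βs t)
          _ = (⨆ β, ∫⁻ x, g x ∂ν β) ^ n := by
              rw [Finset.prod_const, Finset.card_univ, Fintype.card_fin]

/-- Let `μ0` be the null law of the pivotal statistic, `h` a score with
`∫|h| dμ0 < ∞` and `m0 = ∫ h dμ0`, and `{ν β}` the family of alternative laws. Define
`R = − inf_{λ ≥ 0} [λ m0 + sup_β log ∫ e^{−λh} dν_β] ∈ [−∞,+∞]` (conventions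
`log(+∞) = +∞`, `e^{−∞} = 0`). If `γ_n / n → m0` (e.g. `γ_n` calibrated so that the threshold
test has type I error exactly `α`), then
`limsup_n [sup_{β_1,…,β_n} ℙ(∑_t h(Y_t) < γ_n)]^{1/n} ≤ e^{−R}`, where `Y_t` are independent
with `Y_t ∼ ν_{β_t}`. -/
theorem stmt_12
    {E : Type*} [MeasurableSpace E]
    (μ0 : Measure E) [IsProbabilityMeasure μ0]
    (h : E → ℝ) (hmeas : Measurable h) (hint : Integrable h μ0)
    {B : Type*} [Nonempty B]
    (ν : B → Measure E) [∀ β, IsProbabilityMeasure (ν β)]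
    (R : EReal)
    (hR : R = -(⨅ l : {l : ℝ // 0 ≤ l},
      ((l.1 * ∫ x, h x ∂μ0 : ℝ) : EReal)
        + ⨆ β : B,
            ENNReal.log (∫⁻ x, ENNReal.ofReal (Real.exp (-l.1 * h x)) ∂(ν β))))
    (γn : ℕ → ℝ)
    (hγn : Tendsto (fun n : ℕ => γn n / n) atTop (nhds (∫ x, h x ∂μ0))) :
    Filter.limsup (fun n : ℕ =>
        (⨆ βs : Fin n → B,
          Measure.pi (fun t => ν (βs t)) {y | ∑ t, h (y t) < γn n}) ^ ((n : ℝ)⁻¹))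
      atTop
      ≤ EReal.exp (-R) := by
  set m0 := ∫ x, h x ∂μ0 with hm0
  set A : ℕ → ℝ≥0∞ := fun n =>
    (⨆ βs : Fin n → B,
      Measure.pi (fun t => ν (βs t)) {y | ∑ t, h (y t) < γn n}) ^ ((n : ℝ)⁻¹) with hA
  have main : ∀ l : {l : ℝ // 0 ≤ l},
      Filter.limsup A atTop
        ≤ EReal.exp (((l.1 * m0 : ℝ) : EReal)
            + ⨆ β : B, ENNReal.log (∫⁻ x, ENNReal.ofReal (Real.exp (-l.1 * h x)) ∂(ν β))) := by
    rintro ⟨l, hl⟩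
    set M : ℝ≥0∞ := ⨆ β, ∫⁻ x, ENNReal.ofReal (Real.exp (-l * h x)) ∂ν β with hM
    have hlog : (⨆ β : B, ENNReal.log (∫⁻ x, ENNReal.ofReal (Real.exp (-l * h x)) ∂(ν β)))
        = ENNReal.log M := by
      exact (ENNReal.logOrderIso.map_iSup _).symm
    rw [hlog]
    by_cases hMtop : M = ⊤
    · rw [hMtop]
      simp only [ENNReal.log_top]
      rw [EReal.add_top_of_ne_bot (by exact EReal.coe_ne_bot _)]
      simp
    · have hexp : EReal.exp (((l * m0 : ℝ) : EReal) + ENNReal.log M)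
          = ENNReal.ofReal (Real.exp (l * m0)) * M := by
        rw [EReal.exp_add, ENNReal.exp_log]
        rfl
      rw [hexp]
      have hev : ∀ᶠ n in atTop,
          A n ≤ ENNReal.ofReal (Real.exp (l * (γn n / n))) * M := by
        filter_upwards [eventually_ge_atTop 1] with n hn
        have hb : (⨆ βs : Fin n → B,
            Measure.pi (fun t => ν (βs t)) {y | ∑ t, h (y t) < γn n})
            ≤ ENNReal.ofReal (Real.exp (l * γn n)) * M ^ n :=
          iSup_le fun βs => chernoff_bound h hmeas ν l hl (γn n) βs
        have hninv : (0:ℝ) ≤ (n : ℝ)⁻¹ := by positivity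
        have hnne : (n:ℝ) ≠ 0 := Nat.cast_ne_zero.mpr (by omega)
        calc A n ≤ (ENNReal.ofReal (Real.exp (l * γn n)) * M ^ n) ^ ((n:ℝ)⁻¹) :=
              ENNReal.rpow_le_rpow hb hninv
          _ = (ENNReal.ofReal (Real.exp (l * γn n))) ^ ((n:ℝ)⁻¹) *
                (M ^ n) ^ ((n:ℝ)⁻¹) := ENNReal.mul_rpow_of_nonneg _ _ hninv
          _ = ENNReal.ofReal (Real.exp (l * (γn n / n))) * M := by
              congr 1
              · rw [ENNReal.ofReal_rpow_of_pos (Real.exp_pos _),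
                  Real.rpow_def_of_pos (Real.exp_pos _), Real.log_exp]
                congr 2
                field_simp
              · rw [← ENNReal.rpow_natCast M n, ← ENNReal.rpow_mul,
                  mul_inv_cancel₀ hnne, ENNReal.rpow_one]
      have hten : Tendsto (fun n : ℕ => ENNReal.ofReal (Real.exp (l * (γn n / n))) * M)
          atTop (nhds (ENNReal.ofReal (Real.exp (l * m0)) * M)) := by
        apply ENNReal.Tendsto.mul_const _ (Or.inr hMtop)
        exact (ENNReal.continuous_ofReal.tendsto _).comp
          ((Real.continuous_exp.tendsto _).comp (hγn.const_mul l))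
      calc Filter.limsup A atTop
          ≤ Filter.limsup (fun n : ℕ => ENNReal.ofReal (Real.exp (l * (γn n / n))) * M)
            atTop := Filter.limsup_le_limsup hev
        _ = ENNReal.ofReal (Real.exp (l * m0)) * M := hten.limsup_eq
  rw [hR, neg_neg]
  have : EReal.exp (⨅ l : {l : ℝ // 0 ≤ l},
      ((l.1 * m0 : ℝ) : EReal)
        + ⨆ β : B, ENNReal.log (∫⁻ x, ENNReal.ofReal (Real.exp (-l.1 * h x)) ∂(ν β)))
      = ⨅ l : {l : ℝ // 0 ≤ l}, EReal.exp (((l.1 * m0 : ℝ) : EReal)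
        + ⨆ β : B, ENNReal.log (∫⁻ x, ENNReal.ofReal (Real.exp (-l.1 * h x)) ∂(ν β))) := by
    exact EReal.expOrderIso.map_iInf _
  rw [this]
  exact le_iInf main
end
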